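/- arXiv:1308.5085 — 7 statements merged into one kernel-verified Lean document; each statement's English description precedes it below -/
import Mathlib

section
/- Let k be a field, R = k[X,Y,Z]/(X^{n+1} - YZ) with n ≥ 0, and char k = p > 0. For every e ≥ 0, writing q = p^e and r for the smallest non-negative residue of q modulo n+1, the k-dimension of R/(X^q, Y^q, Z^q) equals (2 - 1/(n+1))·q² - r + r²/(n+1). -/
open MvPolynomial

namespace KunzAn


open MvPolynomial


/-- Reduction of an exponent triple modulo the relation `x^N = yz`. -/
def red (N : ℕ) (x : ℕ × ℕ × ℕ) : ℕ × ℕ × ℕ :=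
  (x.1 + N * min x.2.1 x.2.2, x.2.1 - min x.2.1 x.2.2, x.2.2 - min x.2.1 x.2.2)

/-- Standard monomials. -/
def Std (N q : ℕ) (x : ℕ × ℕ × ℕ) : Prop :=
  x.1 < q ∧ x.2.1 < q ∧ x.2.2 < q ∧ x.1 + N * (x.2.1 + x.2.2) < N * q

instance (N q : ℕ) (x : ℕ × ℕ × ℕ) : Decidable (Std N q x) := by
  unfold Std; infer_instance

noncomputable def nf (k : Type*) [Semiring k] (N q : ℕ) (x : ℕ × ℕ × ℕ) :
    (ℕ × ℕ × ℕ) →₀ k :=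
  if Std N q (red N x) then Finsupp.single (red N x) 1 else 0

variable {k : Type*} [Semiring k] {N q : ℕ}

lemma red_relation (N a b c : ℕ) : red N (a + N, b, c) = red N (a, b + 1, c + 1) := by
  unfold red
  simp only [Nat.succ_min_succ, Nat.succ_sub_succ, Nat.mul_succ]
  refine Prod.ext ?_ rfl
  simp; ring

lemma nf_relation (a b c : ℕ) : nf k N q (a + N, b, c) = nf k N q (a, b + 1, c + 1) := by
  unfold nf; rw [red_relation]

lemma nf_x (a b c : ℕ) : nf k N q (a + q, b, c) = 0 := by
  unfold nf
  rw [if_neg]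
  rintro ⟨h1, -, -, -⟩
  simp only [red] at h1
  omega

lemma nf_y (hN : 0 < N) (a b c : ℕ) : nf k N q (a, b + q, c) = 0 := by
  unfold nf
  rw [if_neg]
  rintro ⟨-, h2, -, h4⟩
  simp only [red] at h2 h4
  set t := min (b + q) c with ht
  have htc : t ≤ c := min_le_right _ _
  have htb : t ≤ b + q := min_le_left _ _
  -- a + N*t + N*((b+q-t) + (c-t)) ≥ N*q
  have key : q ≤ t + ((b + q - t) + (c - t)) := by omega
  have := Nat.mul_le_mul_left N key
  rw [Nat.mul_add] at this
  omega

lemma nf_z (hN : 0 < N) (a b c : ℕ) : nf k N q (a, b, c + q) = 0 := by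
  unfold nf
  rw [if_neg]
  rintro ⟨-, -, h3, h4⟩
  simp only [red] at h3 h4
  set t := min b (c + q) with ht
  have htb : t ≤ b := min_le_left _ _
  have htc : t ≤ c + q := min_le_right _ _
  have key : q ≤ t + ((b - t) + (c + q - t)) := by omega
  have := Nat.mul_le_mul_left N key
  rw [Nat.mul_add] at this
  omega

lemma nf_std {x : ℕ × ℕ × ℕ} (hmin : min x.2.1 x.2.2 = 0) (h : Std N q x) :
    nf k N q x = Finsupp.single x 1 := by
  have hred : red N x = x := by
    unfold red; rw [hmin]; simp
  unfold nf; rw [hred, if_pos h]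


section
variable (k : Type*) [Field k] (N q : ℕ)


noncomputable def f3 (a b c : ℕ) : Fin 3 →₀ ℕ :=
  Finsupp.single 0 a + Finsupp.single 1 b + Finsupp.single 2 c

@[simp] lemma f3_apply0 (a b c : ℕ) : f3 a b c 0 = a := by
  simp [f3, Finsupp.single_apply]
@[simp] lemma f3_apply1 (a b c : ℕ) : f3 a b c 1 = b := by
  simp [f3, Finsupp.single_apply]
@[simp] lemma f3_apply2 (a b c : ℕ) : f3 a b c 2 = c := by
  simp [f3, Finsupp.single_apply]

lemma f3_eq (d : Fin 3 →₀ ℕ) : f3 (d 0) (d 1) (d 2) = d := by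
  ext i
  fin_cases i <;> simp


noncomputable def phi : MvPolynomial (Fin 3) k →ₗ[k] ((ℕ × ℕ × ℕ) →₀ k) :=
  (basisMonomials (Fin 3) k).constr k (fun d => nf k N q (d 0, d 1, d 2))

lemma phi_monomial (d : Fin 3 →₀ ℕ) (c : k) :
    phi k N q (monomial d c) = c • nf k N q (d 0, d 1, d 2) := by
  have h1 : monomial d c = c • monomial d (1 : k) := by
    rw [smul_monomial, smul_eq_mul, mul_one]
  rw [h1, map_smul]
  congr 1
  have := Module.Basis.constr_basis (basisMonomials (Fin 3) k) k
    (fun d => nf k N q (d 0, d 1, d 2)) d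
  rwa [coe_basisMonomials] at this

def gens : Set (MvPolynomial (Fin 3) k) :=
  {X 0 ^ N - X 1 * X 2, X 0 ^ q, X 1 ^ q, X 2 ^ q}

lemma X_mul_X : (X 1 : MvPolynomial (Fin 3) k) * X 2
    = monomial (Finsupp.single 1 1 + Finsupp.single 2 1) 1 := by
  rw [X, X, monomial_mul, one_mul]

lemma phi_mul_gen (hN : 0 < N) :
    ∀ g ∈ gens k N q, ∀ pl : MvPolynomial (Fin 3) k, phi k N q (pl * g) = 0 := by
  intro g hg pl
  have key : ∀ d : Fin 3 →₀ ℕ, phi k N q (monomial d 1 * g) = 0 := by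
    intro d
    rcases hg with h | h | h | h
    · subst h
      rw [mul_sub, X_pow_eq_monomial, X_mul_X, monomial_mul, monomial_mul, map_sub,
        phi_monomial, phi_monomial]
      simp only [one_mul, Finsupp.add_apply, Finsupp.single_apply, Fin.reduceEq, if_true, if_false, ite_true, ite_false, add_zero, zero_add]
      rw [nf_relation]
      simp
    · subst h
      rw [X_pow_eq_monomial, monomial_mul, phi_monomial]
      simp only [one_mul, Finsupp.add_apply, Finsupp.single_apply, Fin.reduceEq, if_true, if_false, ite_true, ite_false, add_zero, zero_add]
      rw [nf_x]
      simp
    · subst h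
      rw [X_pow_eq_monomial, monomial_mul, phi_monomial]
      simp only [one_mul, Finsupp.add_apply, Finsupp.single_apply, Fin.reduceEq, if_true, if_false, ite_true, ite_false, add_zero, zero_add]
      rw [nf_y hN]
      simp
    · rw [Set.mem_singleton_iff] at h; subst h
      rw [X_pow_eq_monomial, monomial_mul, phi_monomial]
      simp only [one_mul, Finsupp.add_apply, Finsupp.single_apply, Fin.reduceEq, if_true, if_false, ite_true, ite_false, add_zero, zero_add]
      rw [nf_z hN]
      simp
  have L : phi k N q ∘ₗ (LinearMap.mulRight k g) = 0 := by
    apply (basisMonomials (Fin 3) k).ext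
    intro d
    simp only [LinearMap.comp_apply, LinearMap.mulRight_apply, LinearMap.zero_apply,
      coe_basisMonomials]
    exact key d
  have := LinearMap.congr_fun L pl
  simpa using this

lemma phi_vanish (hN : 0 < N) (x : MvPolynomial (Fin 3) k)
    (hx : x ∈ Ideal.span (gens k N q)) : phi k N q x = 0 := by
  have H : ∀ pl, phi k N q (pl * x) = 0 := by
    induction hx using Submodule.span_induction with
    | mem g hg => exact fun pl => phi_mul_gen k N q hN g hg pl
    | zero => intro pl; simp
    | add a b _ _ ha hb => intro pl; rw [mul_add, map_add, ha, hb, add_zero]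
    | smul r y _ hy => intro pl; rw [smul_eq_mul, ← mul_assoc]; exact hy _
  simpa using H 1



noncomputable abbrev I := Ideal.span (gens k N q)
noncomputable def M (a b c : ℕ) : MvPolynomial (Fin 3) k ⧸ I k N q :=
  Ideal.Quotient.mk (I k N q) (monomial (f3 a b c) 1)

lemma f3_add_single0 (m a b c : ℕ) :
    Finsupp.single 0 m + f3 a b c = f3 (a + m) b c := by
  ext i; fin_cases i <;> simp [Finsupp.single_apply] <;> omega
lemma f3_add_single1 (m a b c : ℕ) :
    Finsupp.single 1 m + f3 a b c = f3 a (b + m) c := by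
  ext i; fin_cases i <;> simp [Finsupp.single_apply] <;> omega
lemma f3_add_single2 (m a b c : ℕ) :
    Finsupp.single 2 m + f3 a b c = f3 a b (c + m) := by
  ext i; fin_cases i <;> simp [Finsupp.single_apply] <;> omega
lemma f3_add_single12 (a b c : ℕ) :
    Finsupp.single 1 1 + Finsupp.single 2 1 + f3 a b c = f3 a (b + 1) (c + 1) := by
  ext i; fin_cases i <;> simp [Finsupp.single_apply] <;> omega

lemma M_x (a b c : ℕ) : M k N q (a + q) b c = 0 := by
  rw [M, Ideal.Quotient.eq_zero_iff_mem]
  have : (monomial (f3 (a + q) b c) (1 : k)) = X 0 ^ q * monomial (f3 a b c) 1 := by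
    rw [X_pow_eq_monomial, monomial_mul, one_mul, f3_add_single0]
  rw [this]
  exact Ideal.mul_mem_right _ _ (Ideal.subset_span (by simp [gens]))

lemma M_y (a b c : ℕ) : M k N q a (b + q) c = 0 := by
  rw [M, Ideal.Quotient.eq_zero_iff_mem]
  have : (monomial (f3 a (b + q) c) (1 : k)) = X 1 ^ q * monomial (f3 a b c) 1 := by
    rw [X_pow_eq_monomial, monomial_mul, one_mul, f3_add_single1]
  rw [this]
  exact Ideal.mul_mem_right _ _ (Ideal.subset_span (by simp [gens]))

lemma M_z (a b c : ℕ) : M k N q a b (c + q) = 0 := by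
  rw [M, Ideal.Quotient.eq_zero_iff_mem]
  have : (monomial (f3 a b (c + q)) (1 : k)) = X 2 ^ q * monomial (f3 a b c) 1 := by
    rw [X_pow_eq_monomial, monomial_mul, one_mul, f3_add_single2]
  rw [this]
  exact Ideal.mul_mem_right _ _ (Ideal.subset_span (by simp [gens]))

lemma M_rel (a b c : ℕ) : M k N q (a + N) b c = M k N q a (b + 1) (c + 1) := by
  rw [M, M, Ideal.Quotient.eq]
  have : (monomial (f3 (a + N) b c) (1 : k)) - monomial (f3 a (b + 1) (c + 1)) 1
      = (X 0 ^ N - X 1 * X 2) * monomial (f3 a b c) 1 := by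
    rw [sub_mul, X_pow_eq_monomial, X_mul_X, monomial_mul, monomial_mul, one_mul,
      f3_add_single0, f3_add_single12]
  rw [this]
  exact Ideal.mul_mem_right _ _ (Ideal.subset_span (by simp [gens]))

lemma M_rel_t (t a b c : ℕ) : M k N q (a + N * t) b c = M k N q a (b + t) (c + t) := by
  induction t generalizing a b c with
  | zero => simp
  | succ t ih =>
    have h1 : a + N * (t + 1) = (a + N) + N * t := by ring
    rw [h1, ih, M_rel]
    congr 1 <;> omega

def stdSet : Finset (ℕ × ℕ × ℕ) :=
  (Finset.range q ×ˢ Finset.range q ×ˢ Finset.range q).filter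
    (fun x => min x.2.1 x.2.2 = 0 ∧ x.1 + N * (x.2.1 + x.2.2) < N * q)

lemma mem_stdSet {x : ℕ × ℕ × ℕ} :
    x ∈ stdSet N q ↔ min x.2.1 x.2.2 = 0 ∧ Std N q x := by
  simp only [stdSet, Finset.mem_filter, Finset.mem_product, Finset.mem_range, Std]
  tauto

noncomputable def v : {x // x ∈ stdSet N q} →
    MvPolynomial (Fin 3) k ⧸ I k N q :=
  fun x => M k N q x.1.1 x.1.2.1 x.1.2.2

lemma M_mem_span (hN : 0 < N) (a b c : ℕ) :
    M k N q a b c ∈ Submodule.span k (Set.range (v k N q)) := by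
  set t := min b c with ht
  have htb : t ≤ b := min_le_left _ _
  have htc : t ≤ c := min_le_right _ _
  have key : M k N q a b c = M k N q (a + N * t) (b - t) (c - t) := by
    rw [M_rel_t]
    congr 1 <;> omega
  rw [key]
  set a' := a + N * t with ha'
  set b' := b - t with hb'
  set c' := c - t with hc'
  have hmin : min b' c' = 0 := by omega
  by_cases hstd : Std N q (a', b', c')
  · have hx : (a', b', c') ∈ stdSet N q := (mem_stdSet N q).mpr ⟨hmin, hstd⟩
    exact Submodule.subset_span ⟨⟨(a', b', c'), hx⟩, rfl⟩
  · rw [Std] at hstd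
    push_neg at hstd
    by_cases h1 : a' < q
    · by_cases h2 : b' < q
      · by_cases h3 : c' < q
        · -- overflow case : a' + N*(b'+c') ≥ N*q, and b' = 0 or c' = 0
          have h4 : N * q ≤ a' + N * (b' + c') := hstd h1 h2 h3
          rcases Nat.min_eq_zero_iff.mp hmin with h | h
          · -- b' = 0
            rw [h, zero_add] at h4
            rw [h]
            have hs : N * q = N * c' + N * (q - c') := by
              rw [← Nat.mul_add]; congr 1; omega
            have hge : N * (q - c') ≤ a' := by omega
            have : M k N q a' 0 c' = M k N q ((a' - N * (q - c')) + N * (q - c')) 0 c' := by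
              congr 1; omega
            rw [this, M_rel_t]
            have hcq : c' + (q - c') = q := by omega
            rw [zero_add, hcq]
            have h0 : M k N q (a' - N * (q - c')) (q - c') q = 0 := by
              simpa using M_z k N q (a' - N * (q - c')) (q - c') 0
            rw [h0]
            exact Submodule.zero_mem _
          · -- c' = 0
            rw [h, add_zero] at h4
            rw [h]
            have hs : N * q = N * b' + N * (q - b') := by
              rw [← Nat.mul_add]; congr 1; omega
            have hge : N * (q - b') ≤ a' := by omega
            have : M k N q a' b' 0 = M k N q ((a' - N * (q - b')) + N * (q - b')) b' 0 := by
              congr 1; omega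
            rw [this, M_rel_t]
            have hbq : b' + (q - b') = q := by omega
            rw [zero_add, hbq]
            have h0 : M k N q (a' - N * (q - b')) q (q - b') = 0 := by
              simpa using M_y k N q (a' - N * (q - b')) 0 (q - b')
            rw [h0]
            exact Submodule.zero_mem _
        · push_neg at h3
          have : M k N q a' b' c' = M k N q a' b' ((c' - q) + q) := by congr 1; omega
          rw [this, M_z]; exact Submodule.zero_mem _
      · push_neg at h2
        have : M k N q a' b' c' = M k N q a' ((b' - q) + q) c' := by congr 1; omega
        rw [this, M_y]; exact Submodule.zero_mem _
    · push_neg at h1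
      have : M k N q a' b' c' = M k N q ((a' - q) + q) b' c' := by congr 1; omega
      rw [this, M_x]; exact Submodule.zero_mem _


lemma span_top (hN : 0 < N) :
    Submodule.span k (Set.range (v k N q)) = ⊤ := by
  rw [eq_top_iff]
  rintro x -
  obtain ⟨y, rfl⟩ := Ideal.Quotient.mk_surjective x
  have hy : y ∈ Submodule.span k (Set.range (basisMonomials (Fin 3) k)) := by
    rw [Module.Basis.span_eq]; trivial
  induction hy using Submodule.span_induction with
  | mem z hz =>
    obtain ⟨d, rfl⟩ := hz
    rw [coe_basisMonomials]
    have : (Ideal.Quotient.mk (I k N q)) (monomial d 1) = M k N q (d 0) (d 1) (d 2) := by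
      rw [M, f3_eq]
    rw [this]
    exact M_mem_span k N q hN _ _ _
  | zero => rw [(Ideal.Quotient.mk (I k N q)).map_zero]; exact Submodule.zero_mem _
  | add a b _ _ ha hb => rw [(Ideal.Quotient.mk (I k N q)).map_add]; exact Submodule.add_mem _ ha hb
  | smul r z _ hz =>
    have : (Ideal.Quotient.mk (I k N q)) (r • z) = r • (Ideal.Quotient.mk (I k N q)) z := by
      rw [← Ideal.Quotient.mkₐ_eq_mk k, map_smul]
    rw [this]
    exact Submodule.smul_mem _ _ hz

lemma indep (hN : 0 < N) : LinearIndependent k (v k N q) := by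
  rw [linearIndependent_iff']
  intro s g hsum i hi
  -- push the sum into the polynomial ring
  have hrepr : ∑ j ∈ s, g j • v k N q j
      = Ideal.Quotient.mkₐ k (I k N q)
          (∑ j ∈ s, g j • monomial (f3 j.1.1 j.1.2.1 j.1.2.2) (1 : k)) := by
    rw [map_sum]
    refine Finset.sum_congr rfl (fun j _ => ?_)
    rw [map_smul, v, M, Ideal.Quotient.mkₐ_eq_mk]
  rw [hrepr] at hsum
  have hmem : (∑ j ∈ s, g j • monomial (f3 j.1.1 j.1.2.1 j.1.2.2) (1 : k)) ∈ I k N q := by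
    rwa [Ideal.Quotient.mkₐ_eq_mk, Ideal.Quotient.eq_zero_iff_mem] at hsum
  have hphi := phi_vanish k N q hN _ hmem
  rw [map_sum] at hphi
  have hterm : ∀ j : {x // x ∈ stdSet N q},
      phi k N q (g j • monomial (f3 j.1.1 j.1.2.1 j.1.2.2) (1 : k))
        = g j • Finsupp.single (j : ℕ × ℕ × ℕ) (1 : k) := by
    intro j
    rw [map_smul, phi_monomial]
    have hj := (mem_stdSet N q).mp j.2
    have hstd : nf k N q (j.1.1, j.1.2.1, j.1.2.2) = Finsupp.single (j : ℕ × ℕ × ℕ) 1 := by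
      rw [nf_std hj.1 hj.2]
    simp only [f3_apply0, f3_apply1, f3_apply2, one_smul, hstd]
  simp only [hterm] at hphi
  have := DFunLike.congr_fun hphi (i : ℕ × ℕ × ℕ)
  simp only [Finsupp.coe_zero, Pi.zero_apply, Finsupp.finset_sum_apply, Finsupp.smul_apply,
    Finsupp.single_apply, smul_eq_mul] at this
  rw [Finset.sum_eq_single_of_mem i hi] at this
  · simpa using this
  · intro j _ hji
    simp [Subtype.coe_injective.ne hji]

noncomputable def quotBasis (hN : 0 < N) :
    Module.Basis {x // x ∈ stdSet N q} k (MvPolynomial (Fin 3) k ⧸ I k N q) :=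
  Module.Basis.mk (indep k N q hN) (by rw [span_top k N q hN])

lemma finrank_eq (hN : 0 < N) :
    Module.finrank k (MvPolynomial (Fin 3) k ⧸ I k N q) = (stdSet N q).card := by
  rw [Module.finrank_eq_card_basis (quotBasis k N q hN), Fintype.card_coe]


end

lemma filter_lt_card (q K : ℕ) :
    ((Finset.range q).filter (fun a => a < K)).card = min q K := by
  have : (Finset.range q).filter (fun a => a < K) = Finset.range (min q K) := by
    ext x; simp only [Finset.mem_filter, Finset.mem_range, lt_min_iff]
  rw [this, Finset.card_range]

lemma inner_count (P : Prop) [Decidable P] (q K : ℕ) :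
    (∑ a ∈ Finset.range q, if P ∧ a < K then 1 else 0) = if P then min q K else 0 := by
  by_cases hP : P
  · simp only [hP, true_and, if_true]
    rw [Finset.sum_boole]
    rw [← filter_lt_card q K]
    simp
  · simp [hP]


/-- partial column sum -/
def Tsum (N q : ℕ) : ℕ := ∑ b ∈ Finset.range q, min q (N * q - N * b)
def Usum (N q : ℕ) : ℕ := ∑ b ∈ Finset.range q, (q - N * (q - b))

lemma card_eq_T (N q : ℕ) (hN : 0 < N) (hq : 0 < q) : (stdSet N q).card + q = 2 * Tsum N q := by
  classical
  have h1 : (stdSet N q).card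
      = ∑ x ∈ (Finset.range q ×ˢ Finset.range q ×ˢ Finset.range q),
          (if min x.2.1 x.2.2 = 0 ∧ x.1 + N * (x.2.1 + x.2.2) < N * q then 1 else 0) := by
    rw [stdSet, Finset.card_filter]
  rw [h1, Finset.sum_product]
  -- swap the order of summation
  rw [Finset.sum_comm]
  have h2 : ∀ y ∈ Finset.range q ×ˢ Finset.range q,
      (∑ a ∈ Finset.range q,
        if min y.1 y.2 = 0 ∧ a + N * (y.1 + y.2) < N * q then 1 else 0)
      = (if min y.1 y.2 = 0 then min q (N * q - N * (y.1 + y.2)) else 0) := by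
    intro y _
    rw [← inner_count (min y.1 y.2 = 0) q (N * q - N * (y.1 + y.2))]
    refine Finset.sum_congr rfl (fun a _ => ?_)
    congr 1
    have : (a + N * (y.1 + y.2) < N * q) = (a < N * q - N * (y.1 + y.2)) := by
      apply propext; omega
    rw [this]
  rw [Finset.sum_congr rfl h2, Finset.sum_product]
  have h3 : ∀ b c : ℕ,
      (if min b c = 0 then min q (N * q - N * (b + c)) else 0)
      = (if b = 0 ∨ c = 0 then min q (N * q - N * (b + c)) else 0) := by
    intro b c; congr 1; apply propext; omega
  -- the outer sum over b
  have hb0 : (∑ c ∈ Finset.range q,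
      if min (0:ℕ) c = 0 then min q (N * q - N * (0 + c)) else 0) = Tsum N q := by
    rw [Tsum]
    refine Finset.sum_congr rfl (fun c _ => ?_)
    simp
  have hbpos : ∀ b ∈ (Finset.range q).erase 0,
      (∑ c ∈ Finset.range q,
        if min b c = 0 then min q (N * q - N * (b + c)) else 0)
      = min q (N * q - N * b) := by
    intro b hb
    obtain ⟨hbne, hbq⟩ := Finset.mem_erase.mp hb
    rw [Finset.sum_eq_single_of_mem 0 (Finset.mem_range.mpr hq)]
    · simp
    · intro c _ hc
      rw [if_neg]
      omega
  rw [← Finset.add_sum_erase _ _ (Finset.mem_range.mpr hq), hb0,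
    Finset.sum_congr rfl hbpos]
  have hT : Tsum N q = min q (N * q - N * 0) + ∑ b ∈ (Finset.range q).erase 0,
      min q (N * q - N * b) := by
    rw [Tsum, ← Finset.add_sum_erase _ _ (Finset.mem_range.mpr hq)]
  have hmin0 : min q (N * q - N * 0) = q := by
    have h := Nat.le_mul_of_pos_left q hN
    simp only [Nat.mul_zero, Nat.sub_zero]
    omega
  rw [hmin0] at hT
  omega

lemma T_add_U (N q : ℕ) (hN : 0 < N) : Tsum N q + Usum N q = q * q := by
  rw [Tsum, Usum, ← Finset.sum_add_distrib]
  have h : ∀ b ∈ Finset.range q, min q (N * q - N * b) + (q - N * (q - b)) = q := by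
    intro b hb
    rw [Finset.mem_range] at hb
    have hD : N * q = N * b + N * (q - b) := by
      rw [← Nat.mul_add]; congr 1; omega
    omega
  rw [Finset.sum_congr rfl h, Finset.sum_const, Finset.card_range, smul_eq_mul]

lemma U_eq (N q : ℕ) : Usum N q = ∑ t ∈ Finset.range q, (q - N * (t + 1)) := by
  rw [Usum, ← Finset.sum_range_reflect]
  refine Finset.sum_congr rfl (fun t ht => ?_)
  rw [Finset.mem_range] at ht
  congr 2
  omega

lemma U_eq2 (N q : ℕ) (hN : 0 < N) :
    Usum N q = ∑ t ∈ Finset.range (q / N), (q - N * (t + 1)) := by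
  set m := q / N with hm
  set r := q % N with hr
  have hqm : N * m + r = q := Nat.div_add_mod q N
  have hrN : r < N := Nat.mod_lt _ hN
  have hmq : m ≤ q := Nat.div_le_self q N
  rw [U_eq, Finset.range_eq_Ico, Finset.range_eq_Ico,
    ← Finset.sum_Ico_consecutive _ (Nat.zero_le m) hmq]
  have h0 : ∑ t ∈ Finset.Ico m q, (q - N * (t + 1)) = 0 := by
    apply Finset.sum_eq_zero
    intro t ht
    rw [Finset.mem_Ico] at ht
    have : N * (m + 1) ≤ N * (t + 1) := Nat.mul_le_mul_left N (by omega)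
    rw [Nat.mul_succ] at this
    omega
  omega

lemma two_U (N q : ℕ) (hN : 0 < N) :
    2 * Usum N q + N * (q / N) = (q / N) * q + (q / N) * (q % N) := by
  set m := q / N with hm
  set r := q % N with hr
  have hqm : N * m + r = q := Nat.div_add_mod q N
  have hrN : r < N := Nat.mod_lt _ hN
  rcases Nat.eq_zero_or_pos m with hm0 | hmpos
  · rw [U_eq2 N q hN, ← hm, hm0]
    simp
  · have hNq : N ≤ q := by
      calc N = N * 1 := by ring
      _ ≤ N * m := Nat.mul_le_mul_left N hmpos
      _ ≤ q := by omega
    have hrefl : Usum N q = ∑ t ∈ Finset.range m, (q - N * (m - t)) := by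
      rw [U_eq2 N q hN, ← hm, ← Finset.sum_range_reflect]
      refine Finset.sum_congr rfl (fun t ht => ?_)
      rw [Finset.mem_range] at ht
      congr 2
      omega
    have h2U : 2 * Usum N q = ∑ t ∈ Finset.range m, ((q - N * (t + 1)) + (q - N * (m - t))) := by
      rw [Finset.sum_add_distrib, ← U_eq2 N q hN, ← hrefl]
      ring
    have hterm : ∀ t ∈ Finset.range m, (q - N * (t + 1)) + (q - N * (m - t)) = q + r - N := by
      intro t ht
      rw [Finset.mem_range] at ht
      have h1 : N * (t + 1) ≤ N * m := Nat.mul_le_mul_left N (by omega)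
      have h2 : N * (m - t) ≤ N * m := Nat.mul_le_mul_left N (by omega)
      have h3 : N * (t + 1) + N * (m - t) = N * m + N := by
        rw [← Nat.mul_add]
        have : (t + 1) + (m - t) = m + 1 := by omega
        rw [this, Nat.mul_succ]
      omega
    rw [h2U, Finset.sum_congr rfl hterm, Finset.sum_const, Finset.card_range, smul_eq_mul]
    have : m * (q + r - N) + N * m = m * q + m * r := by
      have h4 : (q + r - N) + N = q + r := by omega
      calc m * (q + r - N) + N * m = m * ((q + r - N) + N) := by ring
      _ = m * (q + r) := by rw [h4]
      _ = m * q + m * r := by ring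
    omega

lemma card_stdSet (N q : ℕ) (hN : 0 < N) (hq : 0 < q) :
    (stdSet N q).card + ((q / N) * q + (q / N) * (q % N) + q % N) = 2 * q ^ 2 := by
  have h1 := card_eq_T N q hN hq
  have h2 := T_add_U N q hN
  have h3 := two_U N q hN
  have h4 : N * (q / N) + q % N = q := Nat.div_add_mod q N
  have h5 : q ^ 2 = q * q := sq q
  set m := q / N
  set r := q % N
  set A := (stdSet N q).card
  set T := Tsum N q
  set U := Usum N q
  set P1 := q * q
  set P2 := m * q
  set P3 := m * r
  set P4 := N * m
  omega


end KunzAn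

/-- **Kunz.** The Hilbert-Kunz function of the A_n ring
`k[X,Y,Z]/(X^{n+1} - YZ)` in characteristic `p > 0`:
with `q = p^e` and `r = q % (n+1)`, the colength of `(X^q, Y^q, Z^q)` is
`(2 - 1/(n+1)) q² - r + r²/(n+1)`. -/
theorem stmt_1 (k : Type*) [Field k] (p : ℕ) (hp : p.Prime) [CharP k p]
    (n : ℕ) (e : ℕ) :
    (Module.finrank k (MvPolynomial (Fin 3) k ⧸
        (Ideal.span {(X 0 : MvPolynomial (Fin 3) k) ^ (n + 1) - X 1 * X 2,
          X 0 ^ p ^ e, X 1 ^ p ^ e, X 2 ^ p ^ e} : Ideal (MvPolynomial (Fin 3) k))) : ℚ)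
      = (2 - 1 / ((n : ℚ) + 1)) * ((p : ℚ) ^ e) ^ 2
        - ((p ^ e % (n + 1) : ℕ) : ℚ)
        + ((p ^ e % (n + 1) : ℕ) : ℚ) ^ 2 / ((n : ℚ) + 1) := by
  have hN : 0 < n + 1 := Nat.succ_pos n
  have hq : 0 < p ^ e := pow_pos hp.pos e
  have hfr := KunzAn.finrank_eq k (n + 1) (p ^ e) hN
  have hId : Ideal.span {(X 0 : MvPolynomial (Fin 3) k) ^ (n + 1) - X 1 * X 2,
      X 0 ^ p ^ e, X 1 ^ p ^ e, X 2 ^ p ^ e} = KunzAn.I k (n + 1) (p ^ e) := rfl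
  rw [hId, hfr]
  have hcount := KunzAn.card_stdSet (n + 1) (p ^ e) hN hq
  set m := p ^ e / (n + 1) with hm
  set r := p ^ e % (n + 1) with hr
  have hqm : (n + 1) * m + r = p ^ e := Nat.div_add_mod _ _
  have hc : ((KunzAn.stdSet (n + 1) (p ^ e)).card : ℚ)
      + ((m : ℚ) * (p : ℚ) ^ e + (m : ℚ) * (r : ℚ) + (r : ℚ)) = 2 * ((p : ℚ) ^ e) ^ 2 := by
    exact_mod_cast congrArg (Nat.cast (R := ℚ)) hcount
  have hqmQ : ((n : ℚ) + 1) * (m : ℚ) + (r : ℚ) = (p : ℚ) ^ e := by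
    exact_mod_cast hqm
  have hNQ : ((n : ℚ) + 1) ≠ 0 := by positivity
  field_simp
  linear_combination ((n : ℚ) + 1) * hc - ((p : ℚ) ^ e + (r : ℚ)) * hqmQ
end

section
/- Let k be a field of characteristic 2 and R = k[X,Y,Z]/(X² + Y³ + Z⁵). Then for every e ≥ 1, dim_k R/(X^{2^e}, Y^{2^e}, Z^{2^e}) = 2 · 4^e. -/
open MvPolynomial

set_option synthInstance.maxHeartbeats 1000000
set_option maxHeartbeats 1600000

namespace HKE8

noncomputable section

variable (k : Type*) [Field k] (e : ℕ)

abbrev A1 : Type _ := AdjoinRoot ((Polynomial.X : Polynomial k) ^ 2 ^ e)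

def y1 : A1 k e := AdjoinRoot.root _

abbrev A2 : Type _ := AdjoinRoot ((Polynomial.X : Polynomial (A1 k e)) ^ 2 ^ e)

def z2 : A2 k e := AdjoinRoot.root _

def cc : A2 k e := algebraMap (A1 k e) (A2 k e) (y1 k e) ^ 3 + z2 k e ^ 5

abbrev A3 : Type _ := AdjoinRoot (Polynomial.X ^ 2 + Polynomial.C (cc k e))

def r3 : A3 k e := AdjoinRoot.root _

def pb1 : PowerBasis k (A1 k e) := AdjoinRoot.powerBasis' (Polynomial.monic_X_pow _)
def pb2 : PowerBasis (A1 k e) (A2 k e) := AdjoinRoot.powerBasis' (Polynomial.monic_X_pow _)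
def pb3 : PowerBasis (A2 k e) (A3 k e) :=
  AdjoinRoot.powerBasis' (Polynomial.monic_X_pow_add_C _ (by norm_num))

lemma nontrivialAux {R : Type*} [CommRing R] [Nontrivial R] {g : Polynomial R}
    (hg : g.Monic) (hdeg : g.natDegree ≠ 0) : Nontrivial (AdjoinRoot g) := by
  haveI : Nonempty (Fin (AdjoinRoot.powerBasis' hg).dim) := by
    rw [AdjoinRoot.powerBasis'_dim]; exact ⟨⟨0, Nat.pos_of_ne_zero hdeg⟩⟩
  exact (AdjoinRoot.powerBasis' hg).basis.repr.toEquiv.nontrivial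

instance : Nontrivial (A1 k e) :=
  nontrivialAux (Polynomial.monic_X_pow _)
    (by rw [Polynomial.natDegree_X_pow]; exact pow_ne_zero _ two_ne_zero)

instance : Nontrivial (A2 k e) :=
  nontrivialAux (Polynomial.monic_X_pow _)
    (by rw [Polynomial.natDegree_X_pow]; exact pow_ne_zero _ two_ne_zero)

lemma finrank_A3 : Module.finrank k (A3 k e) = 2 ^ e * 2 ^ e * 2 := by
  let B := ((pb1 k e).basis.smulTower (pb2 k e).basis).smulTower (pb3 k e).basis
  rw [Module.finrank_eq_card_basis B]
  simp [pb1, pb2, pb3, Polynomial.natDegree_X_pow, Polynomial.natDegree_X_pow_add_C]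


def f3 : MvPolynomial (Fin 3) k := X 0 ^ 2 + X 1 ^ 3 + X 2 ^ 5

def IQ : Ideal (MvPolynomial (Fin 3) k) :=
  Ideal.span {f3 k, X 1 ^ 2 ^ e, X 2 ^ 2 ^ e}

abbrev Q : Type _ := MvPolynomial (Fin 3) k ⧸ IQ k e

lemma mem_f3 : f3 k ∈ IQ k e := Ideal.subset_span (by simp)
lemma mem_y : (X 1 : MvPolynomial (Fin 3) k) ^ 2 ^ e ∈ IQ k e := Ideal.subset_span (by simp)
lemma mem_z : (X 2 : MvPolynomial (Fin 3) k) ^ 2 ^ e ∈ IQ k e := Ideal.subset_span (by simp)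

def vec : Fin 3 → A3 k e :=
  ![r3 k e, algebraMap (A2 k e) (A3 k e) (algebraMap (A1 k e) (A2 k e) (y1 k e)),
    algebraMap (A2 k e) (A3 k e) (z2 k e)]

def φ : MvPolynomial (Fin 3) k →ₐ[k] A3 k e := aeval (vec k e)

lemma y1_pow : y1 k e ^ 2 ^ e = 0 := by
  have h := AdjoinRoot.mk_self (f := (Polynomial.X : Polynomial k) ^ 2 ^ e)
  rwa [← AdjoinRoot.aeval_eq, map_pow, Polynomial.aeval_X] at h

lemma z2_pow : z2 k e ^ 2 ^ e = 0 := by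
  have h := AdjoinRoot.mk_self (f := (Polynomial.X : Polynomial (A1 k e)) ^ 2 ^ e)
  rwa [← AdjoinRoot.aeval_eq, map_pow, Polynomial.aeval_X] at h

lemma r3_sq : r3 k e ^ 2 + algebraMap (A2 k e) (A3 k e) (cc k e) = 0 := by
  have h := AdjoinRoot.mk_self (f := Polynomial.X ^ 2 + Polynomial.C (cc k e))
  rwa [← AdjoinRoot.aeval_eq, map_add, map_pow, Polynomial.aeval_X, Polynomial.aeval_C] at h

lemma ker_le : IQ k e ≤ RingHom.ker (φ k e) := by
  rw [IQ, Ideal.span_le]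
  intro x hx
  simp only [Set.mem_insert_iff, Set.mem_singleton_iff] at hx
  rcases hx with rfl | rfl | rfl
  · simp only [SetLike.mem_coe, RingHom.mem_ker, φ, f3, map_add, map_pow, aeval_X]
    have h := r3_sq k e
    simp only [cc, map_add, map_pow] at h
    simp only [vec, Matrix.cons_val_zero, Matrix.cons_val_one, Matrix.head_cons,
      Matrix.cons_val_two, Matrix.tail_cons]
    linear_combination h
  · simp only [SetLike.mem_coe, RingHom.mem_ker, φ, map_pow, aeval_X]
    simp [vec, ← map_pow, y1_pow]
  · simp only [SetLike.mem_coe, RingHom.mem_ker, φ, map_pow, aeval_X]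
    simp [vec, ← map_pow, z2_pow]

def φb : Q k e →ₐ[k] A3 k e :=
  Ideal.Quotient.liftₐ (IQ k e) (φ k e) (fun a ha => ker_le k e ha)

lemma φb_mk (p : MvPolynomial (Fin 3) k) :
    φb k e (Ideal.Quotient.mk (IQ k e) p) = φ k e p := by
  simp [φb, Ideal.Quotient.liftₐ_apply]
  rfl

-- the inverse ring homs
lemma h1 : Polynomial.eval₂ (algebraMap k (Q k e)) (Ideal.Quotient.mk (IQ k e) (X 1))
    ((Polynomial.X : Polynomial k) ^ 2 ^ e) = 0 := by
  rw [Polynomial.eval₂_X_pow, ← map_pow]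
  exact Ideal.Quotient.eq_zero_iff_mem.mpr (mem_y k e)

def ψ1 : A1 k e →+* Q k e :=
  AdjoinRoot.lift (algebraMap k (Q k e)) (Ideal.Quotient.mk (IQ k e) (X 1)) (h1 k e)

lemma h2 : Polynomial.eval₂ (ψ1 k e) (Ideal.Quotient.mk (IQ k e) (X 2))
    ((Polynomial.X : Polynomial (A1 k e)) ^ 2 ^ e) = 0 := by
  rw [Polynomial.eval₂_X_pow, ← map_pow]
  exact Ideal.Quotient.eq_zero_iff_mem.mpr (mem_z k e)

def ψ2 : A2 k e →+* Q k e :=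
  AdjoinRoot.lift (ψ1 k e) (Ideal.Quotient.mk (IQ k e) (X 2)) (h2 k e)

lemma ψ1_root : ψ1 k e (y1 k e) = Ideal.Quotient.mk (IQ k e) (X 1) :=
  AdjoinRoot.lift_root _

lemma ψ2_root : ψ2 k e (z2 k e) = Ideal.Quotient.mk (IQ k e) (X 2) :=
  AdjoinRoot.lift_root _

lemma ψ1_algk (a : k) : ψ1 k e (algebraMap k (A1 k e) a) = algebraMap k (Q k e) a := by
  rw [AdjoinRoot.algebraMap_eq]; exact AdjoinRoot.lift_of _

lemma ψ2_alg (x : A1 k e) : ψ2 k e (algebraMap (A1 k e) (A2 k e) x) = ψ1 k e x := by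
  rw [AdjoinRoot.algebraMap_eq]; exact AdjoinRoot.lift_of _

lemma h3 : Polynomial.eval₂ (ψ2 k e) (Ideal.Quotient.mk (IQ k e) (X 0))
    (Polynomial.X ^ 2 + Polynomial.C (cc k e)) = 0 := by
  have hc : ψ2 k e (cc k e)
      = Ideal.Quotient.mk (IQ k e) (X 1) ^ 3 + Ideal.Quotient.mk (IQ k e) (X 2) ^ 5 := by
    rw [cc, map_add, map_pow, map_pow, ψ2_alg, ψ1_root, ψ2_root]
  rw [Polynomial.eval₂_add, Polynomial.eval₂_X_pow, Polynomial.eval₂_C, hc]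
  have h0 : Ideal.Quotient.mk (IQ k e) (f3 k) = 0 :=
    Ideal.Quotient.eq_zero_iff_mem.mpr (mem_f3 k e)
  simp only [f3, map_add, map_pow] at h0
  linear_combination h0

def ψ3 : A3 k e →+* Q k e :=
  AdjoinRoot.lift (ψ2 k e) (Ideal.Quotient.mk (IQ k e) (X 0)) (h3 k e)

lemma ψ3_root : ψ3 k e (r3 k e) = Ideal.Quotient.mk (IQ k e) (X 0) :=
  AdjoinRoot.lift_root _

lemma ψ3_alg (x : A2 k e) : ψ3 k e (algebraMap (A2 k e) (A3 k e) x) = ψ2 k e x := by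
  rw [AdjoinRoot.algebraMap_eq]; exact AdjoinRoot.lift_of _

lemma ψ3_algk (a : k) : ψ3 k e (algebraMap k (A3 k e) a) = algebraMap k (Q k e) a := by
  rw [IsScalarTower.algebraMap_apply k (A2 k e) (A3 k e), ψ3_alg,
    IsScalarTower.algebraMap_apply k (A1 k e) (A2 k e), ψ2_alg, ψ1_algk]

lemma left_inv : ∀ x : Q k e, ψ3 k e (φb k e x) = x := by
  have key : ((ψ3 k e).comp (φb k e).toRingHom).comp (Ideal.Quotient.mk (IQ k e))
      = Ideal.Quotient.mk (IQ k e) := by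
    refine MvPolynomial.ringHom_ext (fun a => ?_) (fun i => ?_)
    · simp only [RingHom.comp_apply, AlgHom.toRingHom_eq_coe, RingHom.coe_coe]
      rw [φb_mk]
      simp only [φ, aeval_C]
      rw [ψ3_algk]
      rw [IsScalarTower.algebraMap_apply k (MvPolynomial (Fin 3) k) (Q k e),
        MvPolynomial.algebraMap_eq]
      rfl
    · simp only [RingHom.comp_apply, AlgHom.toRingHom_eq_coe, RingHom.coe_coe]
      rw [φb_mk]
      simp only [φ, aeval_X]
      fin_cases i
      · show ψ3 k e (vec k e 0) = Ideal.Quotient.mk (IQ k e) (X 0)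
        rw [show vec k e 0 = r3 k e from rfl]
        exact ψ3_root k e
      · show ψ3 k e (vec k e 1) = Ideal.Quotient.mk (IQ k e) (X 1)
        rw [show vec k e 1
          = algebraMap (A2 k e) (A3 k e) (algebraMap (A1 k e) (A2 k e) (y1 k e)) from rfl,
          ψ3_alg, ψ2_alg, ψ1_root]
      · show ψ3 k e (vec k e 2) = Ideal.Quotient.mk (IQ k e) (X 2)
        rw [show vec k e 2 = algebraMap (A2 k e) (A3 k e) (z2 k e) from rfl,
          ψ3_alg, ψ2_root]
  intro x
  obtain ⟨p, rfl⟩ := Ideal.Quotient.mk_surjective x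
  exact RingHom.congr_fun key p

lemma comp1 : ((φb k e : Q k e →+* A3 k e)).comp (ψ1 k e) = algebraMap (A1 k e) (A3 k e) := by
  rw [← RingHom.cancel_right (AdjoinRoot.mk_surjective
    (g := (Polynomial.X : Polynomial k) ^ 2 ^ e))]
  apply Polynomial.ringHom_ext
  · intro a
    show φb k e (ψ1 k e (AdjoinRoot.mk _ (Polynomial.C a)))
      = algebraMap (A1 k e) (A3 k e) (AdjoinRoot.mk _ (Polynomial.C a))
    rw [show (AdjoinRoot.mk ((Polynomial.X : Polynomial k) ^ 2 ^ e) (Polynomial.C a))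
      = algebraMap k (A1 k e) a from rfl, ψ1_algk]
    rw [← IsScalarTower.algebraMap_apply k (A1 k e) (A3 k e)]
    exact (φb k e).commutes a
  · show φb k e (ψ1 k e (AdjoinRoot.mk _ Polynomial.X))
      = algebraMap (A1 k e) (A3 k e) (AdjoinRoot.mk _ Polynomial.X)
    rw [show (AdjoinRoot.mk ((Polynomial.X : Polynomial k) ^ 2 ^ e) Polynomial.X)
      = y1 k e from rfl, ψ1_root]
    have : φb k e (Ideal.Quotient.mk (IQ k e) (X 1)) = vec k e 1 := by
      rw [φb_mk]; simp [φ]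
    rw [this, IsScalarTower.algebraMap_apply (A1 k e) (A2 k e) (A3 k e)]
    rfl

lemma comp2 : ((φb k e : Q k e →+* A3 k e)).comp (ψ2 k e) = algebraMap (A2 k e) (A3 k e) := by
  rw [← RingHom.cancel_right (AdjoinRoot.mk_surjective
    (g := (Polynomial.X : Polynomial (A1 k e)) ^ 2 ^ e))]
  apply Polynomial.ringHom_ext
  · intro a
    show φb k e (ψ2 k e (AdjoinRoot.mk _ (Polynomial.C a)))
      = algebraMap (A2 k e) (A3 k e) (AdjoinRoot.mk _ (Polynomial.C a))
    rw [show (AdjoinRoot.mk ((Polynomial.X : Polynomial (A1 k e)) ^ 2 ^ e) (Polynomial.C a))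
      = algebraMap (A1 k e) (A2 k e) a from rfl, ψ2_alg]
    rw [← IsScalarTower.algebraMap_apply (A1 k e) (A2 k e) (A3 k e)]
    exact RingHom.congr_fun (comp1 k e) a
  · show φb k e (ψ2 k e (AdjoinRoot.mk _ Polynomial.X))
      = algebraMap (A2 k e) (A3 k e) (AdjoinRoot.mk _ Polynomial.X)
    rw [show (AdjoinRoot.mk ((Polynomial.X : Polynomial (A1 k e)) ^ 2 ^ e) Polynomial.X)
      = z2 k e from rfl, ψ2_root]
    have : φb k e (Ideal.Quotient.mk (IQ k e) (X 2)) = vec k e 2 := by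
      rw [φb_mk]; simp [φ]
    rw [this]
    rfl

lemma comp3 : ((φb k e : Q k e →+* A3 k e)).comp (ψ3 k e) = RingHom.id (A3 k e) := by
  rw [← RingHom.cancel_right (AdjoinRoot.mk_surjective
    (g := Polynomial.X ^ 2 + Polynomial.C (cc k e)))]
  apply Polynomial.ringHom_ext
  · intro a
    show φb k e (ψ3 k e (AdjoinRoot.mk _ (Polynomial.C a)))
      = RingHom.id (A3 k e) (AdjoinRoot.mk _ (Polynomial.C a))
    rw [show (AdjoinRoot.mk (Polynomial.X ^ 2 + Polynomial.C (cc k e)) (Polynomial.C a))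
      = algebraMap (A2 k e) (A3 k e) a from rfl, ψ3_alg]
    exact RingHom.congr_fun (comp2 k e) a
  · show φb k e (ψ3 k e (AdjoinRoot.mk _ Polynomial.X))
      = RingHom.id (A3 k e) (AdjoinRoot.mk _ Polynomial.X)
    rw [show (AdjoinRoot.mk (Polynomial.X ^ 2 + Polynomial.C (cc k e)) Polynomial.X)
      = r3 k e from rfl, ψ3_root]
    have : φb k e (Ideal.Quotient.mk (IQ k e) (X 0)) = vec k e 0 := by
      rw [φb_mk]; simp [φ]
    rw [this]
    rfl

lemma φb_bij : Function.Bijective (φb k e) :=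
  ⟨Function.LeftInverse.injective (left_inv k e),
   fun y => ⟨ψ3 k e y, RingHom.congr_fun (comp3 k e) y⟩⟩

lemma finrank_Q : Module.finrank k (Q k e) = 2 ^ e * 2 ^ e * 2 := by
  rw [(AlgEquiv.ofBijective (φb k e) (φb_bij k e)).toLinearEquiv.finrank_eq, finrank_A3]

end

end HKE8

/-- The Hilbert-Kunz function of the E₈ ring `k[X,Y,Z]/(X²+Y³+Z⁵)`
in characteristic 2 is `e ↦ 2·p^{2e}` for `e ≥ 1`. -/
theorem stmt_2 (k : Type*) [Field k] [CharP k 2] (e : ℕ) (he : 1 ≤ e) :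
    Module.finrank k (MvPolynomial (Fin 3) k ⧸
        (Ideal.span {(X 0 : MvPolynomial (Fin 3) k) ^ 2 + X 1 ^ 3 + X 2 ^ 5,
          X 0 ^ 2 ^ e, X 1 ^ 2 ^ e, X 2 ^ 2 ^ e} : Ideal (MvPolynomial (Fin 3) k)))
      = 2 * 4 ^ e := by
  obtain ⟨d, rfl⟩ : ∃ d, e = d + 1 := ⟨e - 1, by omega⟩
  haveI : Fact (Nat.Prime 2) := ⟨Nat.prime_two⟩
  have h2 : ((2 : ℕ) : MvPolynomial (Fin 3) k) = 0 := by
    exact_mod_cast CharP.cast_eq_zero (MvPolynomial (Fin 3) k) 2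
  have hspan : Ideal.span {(X 0 : MvPolynomial (Fin 3) k) ^ 2 + X 1 ^ 3 + X 2 ^ 5,
      X 0 ^ 2 ^ (d + 1), X 1 ^ 2 ^ (d + 1), X 2 ^ 2 ^ (d + 1)} = HKE8.IQ k (d + 1) := by
    apply le_antisymm
    · rw [Ideal.span_le]
      intro x hx
      simp only [Set.mem_insert_iff, Set.mem_singleton_iff] at hx
      rcases hx with rfl | rfl | rfl | rfl
      · exact HKE8.mem_f3 k (d + 1)
      · -- the interesting generator
        have hf : (HKE8.f3 k) ^ 2 ^ d
            = X 0 ^ 2 ^ (d + 1) + X 1 ^ (3 * 2 ^ d) + X 2 ^ (5 * 2 ^ d) := by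
          have e1 : ((X 0 : MvPolynomial (Fin 3) k) ^ 2) ^ 2 ^ d = X 0 ^ 2 ^ (d + 1) := by
            rw [← pow_mul]; congr 1; ring
          have e2 : ((X 1 : MvPolynomial (Fin 3) k) ^ 3) ^ 2 ^ d = X 1 ^ (3 * 2 ^ d) := by
            rw [← pow_mul]
          have e3 : ((X 2 : MvPolynomial (Fin 3) k) ^ 5) ^ 2 ^ d = X 2 ^ (5 * 2 ^ d) := by
            rw [← pow_mul]
          rw [HKE8.f3, add_pow_char_pow, add_pow_char_pow, e1, e2, e3]
        have key : (X 0 : MvPolynomial (Fin 3) k) ^ 2 ^ (d + 1)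
            = (HKE8.f3 k) ^ 2 ^ d + (X 1 ^ 2 ^ (d + 1)) * X 1 ^ 2 ^ d
              + (X 2 ^ 2 ^ (d + 1)) * X 2 ^ (3 * 2 ^ d) := by
          rw [hf, ← pow_add, ← pow_add,
            show 2 ^ (d + 1) + 2 ^ d = 3 * 2 ^ d by ring,
            show 2 ^ (d + 1) + 3 * 2 ^ d = 5 * 2 ^ d by ring]
          linear_combination (-(X 1 ^ (3 * 2 ^ d)) - X 2 ^ (5 * 2 ^ d)
            : MvPolynomial (Fin 3) k) * h2
        rw [key]
        exact add_mem (add_mem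
          (Ideal.pow_mem_of_mem _ (HKE8.mem_f3 k (d + 1)) _ (by positivity))
          (Ideal.mul_mem_right _ _ (HKE8.mem_y k (d + 1))))
          (Ideal.mul_mem_right _ _ (HKE8.mem_z k (d + 1)))
      · exact HKE8.mem_y k (d + 1)
      · exact HKE8.mem_z k (d + 1)
    · rw [HKE8.IQ, Ideal.span_le]
      intro x hx
      simp only [Set.mem_insert_iff, Set.mem_singleton_iff] at hx
      apply Ideal.subset_span
      rcases hx with rfl | rfl | rfl
      · exact Or.inl rfl
      · exact Or.inr (Or.inr (Or.inl rfl))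
      · exact Or.inr (Or.inr (Or.inr rfl))
  rw [hspan]
  rw [HKE8.finrank_Q k (d + 1)]
  rw [show (4 : ℕ) = 2 * 2 from rfl, mul_pow]
  ring
end

section
/- Let k be a field of characteristic 3 and R = k[X,Y,Z]/(X² + Y³ + Z⁵). Then for every e ≥ 1, dim_k R/(X^{3^e}, Y^{3^e}, Z^{3^e}) = 2 · 9^e. -/
open MvPolynomial

section HKAux
open Polynomial

set_option synthInstance.maxHeartbeats 100000
set_option maxHeartbeats 800000
noncomputable section HK

lemma nontrivial_of_basis {R M : Type*} [Semiring R] [Nontrivial R] [AddCommMonoid M]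
    [Module R M] {ι : Type*} [Nonempty ι] (b : Module.Basis ι R M) : Nontrivial M :=
  ⟨b (Classical.arbitrary ι), 0, b.ne_zero _⟩

variable {k : Type*} [Field k] (q : ℕ)

abbrev C1 : Type _ := AdjoinRoot (Polynomial.X ^ q : Polynomial k)

lemma nontrivial_C1 (hq : 0 < q) : Nontrivial (C1 (k := k) q) :=
  AdjoinRoot.nontrivial _ (by simp [hq.ne'])

abbrev C2 : Type _ := AdjoinRoot (Polynomial.X ^ q : Polynomial (C1 (k := k) q))

def pb1 : PowerBasis k (C1 (k := k) q) := AdjoinRoot.powerBasis' (monic_X_pow q)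
def pb2 : PowerBasis (C1 (k := k) q) (C2 (k := k) q) := AdjoinRoot.powerBasis' (monic_X_pow q)

lemma nontrivial_C2 (hq : 0 < q) : Nontrivial (C2 (k := k) q) := by
  haveI := nontrivial_C1 (k := k) q hq
  haveI : Nonempty (Fin (pb2 (k := k) q).dim) := by
    rw [show (pb2 (k := k) q).dim = q by simp [pb2]]
    exact Fin.pos_iff_nonempty.mp hq
  exact nontrivial_of_basis (pb2 q).basis

def g2 : C2 (k := k) q :=
  (AdjoinRoot.root _) ^ 3 + (algebraMap (C1 (k := k) q) (C2 q) (AdjoinRoot.root _)) ^ 5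

def p3 : Polynomial (C2 (k := k) q) := Polynomial.X ^ 2 + Polynomial.C (g2 q)

abbrev C3 : Type _ := AdjoinRoot (p3 (k := k) q)

lemma monic_p3 : (p3 (k := k) q).Monic :=
  monic_X_pow_add (degree_C_le.trans_lt (by norm_num))

lemma natDegree_p3 (hq : 0 < q) : (p3 (k := k) q).natDegree = 2 := by
  haveI := nontrivial_C2 (k := k) q hq
  exact natDegree_X_pow_add_C

def pb3 : PowerBasis (C2 (k := k) q) (C3 (k := k) q) := AdjoinRoot.powerBasis' (monic_p3 q)

lemma finrank_C3 (hq : 0 < q) : Module.finrank k (C3 (k := k) q) = 2 * q ^ 2 := by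
  haveI := nontrivial_C1 (k := k) q hq
  haveI := nontrivial_C2 (k := k) q hq
  haveI : Module.Free k (C1 (k := k) q) := Module.Free.of_basis (pb1 (k := k) q).basis
  haveI : Module.Free (C1 (k := k) q) (C2 (k := k) q) := Module.Free.of_basis (pb2 q).basis
  haveI : Module.Free (C2 (k := k) q) (C3 (k := k) q) := Module.Free.of_basis (pb3 q).basis
  haveI : Module.Free k (C2 (k := k) q) :=
    Module.Free.of_basis ((pb1 (k := k) q).basis.smulTower (pb2 q).basis)
  have h1 : Module.finrank k (C1 (k := k) q) = q := by
    simpa [pb1] using (pb1 (k := k) q).finrank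
  have h2 : Module.finrank (C1 (k := k) q) (C2 (k := k) q) = q := by
    simpa [pb2] using (pb2 (k := k) q).finrank
  have h3 : Module.finrank (C2 (k := k) q) (C3 (k := k) q) = 2 := by
    simpa [pb3, natDegree_p3 q hq] using (pb3 (k := k) q).finrank
  have t1 := Module.finrank_mul_finrank k (C1 (k := k) q) (C2 (k := k) q)
  have t2 := Module.finrank_mul_finrank k (C2 (k := k) q) (C3 (k := k) q)
  rw [← t2, h3, ← t1, h1, h2]
  ring

-- ext helper for ring homs out of AdjoinRoot
lemma adjoinRoot_ringHom_ext {R S : Type*} [CommRing R] [Semiring S] {f : Polynomial R}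
    {φ ψ : AdjoinRoot f →+* S} (h1 : φ.comp (AdjoinRoot.of f) = ψ.comp (AdjoinRoot.of f))
    (h2 : φ (AdjoinRoot.root f) = ψ (AdjoinRoot.root f)) : φ = ψ := by
  have key : φ.comp (AdjoinRoot.mk f) = ψ.comp (AdjoinRoot.mk f) := by
    apply Polynomial.ringHom_ext'
    · ext r
      simpa using RingHom.congr_fun h1 r
    · simpa using h2
  exact Ideal.Quotient.ringHom_ext key

abbrev A (k : Type*) [Field k] : Type _ := MvPolynomial (Fin 3) k

def I' : Ideal (A k) := Ideal.span
  {MvPolynomial.X 0 ^ 2 + MvPolynomial.X 1 ^ 3 + MvPolynomial.X 2 ^ 5,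
   MvPolynomial.X 1 ^ q, MvPolynomial.X 2 ^ q}

abbrev Q : Type _ := A k ⧸ I' (k := k) q

def xQ : Q (k := k) q := Ideal.Quotient.mk _ (MvPolynomial.X 0)
def yQ : Q (k := k) q := Ideal.Quotient.mk _ (MvPolynomial.X 1)
def zQ : Q (k := k) q := Ideal.Quotient.mk _ (MvPolynomial.X 2)

lemma fQ_zero : (xQ (k := k) q) ^ 2 + (yQ q) ^ 3 + (zQ q) ^ 5 = 0 := by
  have h : (Ideal.Quotient.mk (I' (k := k) q))
      (MvPolynomial.X 0 ^ 2 + MvPolynomial.X 1 ^ 3 + MvPolynomial.X 2 ^ 5) = 0 :=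
    Ideal.Quotient.eq_zero_iff_mem.mpr (Ideal.subset_span (by simp))
  simp only [map_add, map_pow] at h
  exact h

lemma yQ_pow : (yQ (k := k) q) ^ q = 0 := by
  have h : (Ideal.Quotient.mk (I' (k := k) q)) (MvPolynomial.X 1 ^ q) = 0 :=
    Ideal.Quotient.eq_zero_iff_mem.mpr (Ideal.subset_span (by simp))
  simp only [map_pow] at h
  exact h

lemma zQ_pow : (zQ (k := k) q) ^ q = 0 := by
  have h : (Ideal.Quotient.mk (I' (k := k) q)) (MvPolynomial.X 2 ^ q) = 0 :=
    Ideal.Quotient.eq_zero_iff_mem.mpr (Ideal.subset_span (by simp))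
  simp only [map_pow] at h
  exact h

def ψ1 : C1 (k := k) q →+* Q (k := k) q :=
  AdjoinRoot.lift (algebraMap k (Q q)) (zQ q) (by simp [zQ_pow])

def ψ2 : C2 (k := k) q →+* Q (k := k) q :=
  AdjoinRoot.lift (ψ1 q) (yQ q) (by simp [yQ_pow])

lemma ψ2_g2 : ψ2 (k := k) q (g2 q) = (yQ q) ^ 3 + (zQ q) ^ 5 := by
  unfold g2 ψ2
  rw [map_add, map_pow, map_pow, AdjoinRoot.lift_root, AdjoinRoot.algebraMap_eq,
    AdjoinRoot.lift_of]
  unfold ψ1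
  rw [AdjoinRoot.lift_root]

def ψ3 : C3 (k := k) q →+* Q (k := k) q :=
  AdjoinRoot.lift (ψ2 q) (xQ q) (by
    simp only [p3, Polynomial.eval₂_add, Polynomial.eval₂_X_pow, Polynomial.eval₂_C]
    rw [ψ2_g2]
    simpa [add_assoc] using fQ_zero (k := k) q)

def x3 : C3 (k := k) q := AdjoinRoot.root _
def y3 : C3 (k := k) q := algebraMap (C2 (k := k) q) (C3 (k := k) q) (AdjoinRoot.root _)
def z3 : C3 (k := k) q :=
  algebraMap (C2 (k := k) q) (C3 (k := k) q)
    (algebraMap (C1 (k := k) q) (C2 (k := k) q) (AdjoinRoot.root _))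

lemma y3_pow : (y3 (k := k) q) ^ q = 0 := by
  have h : (AdjoinRoot.root (Polynomial.X ^ q : Polynomial (C1 (k := k) q))) ^ q = 0 := by
    have := AdjoinRoot.eval₂_root (Polynomial.X ^ q : Polynomial (C1 (k := k) q))
    simpa using this
  rw [y3, ← map_pow, h, map_zero]

lemma z3_pow : (z3 (k := k) q) ^ q = 0 := by
  have h : (AdjoinRoot.root (Polynomial.X ^ q : Polynomial k)) ^ q = 0 := by
    have := AdjoinRoot.eval₂_root (Polynomial.X ^ q : Polynomial k)
    simpa using this
  rw [z3, ← map_pow, ← map_pow, h, map_zero, map_zero]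

lemma x3_rel : (x3 (k := k) q) ^ 2 + (y3 q) ^ 3 + (z3 q) ^ 5 = 0 := by
  have h : Polynomial.eval₂ (AdjoinRoot.of (p3 (k := k) q)) (AdjoinRoot.root (p3 q))
      (Polynomial.X ^ 2 + Polynomial.C (g2 q)) = 0 := AdjoinRoot.eval₂_root (p3 (k := k) q)
  simp only [Polynomial.eval₂_add, Polynomial.eval₂_X_pow, Polynomial.eval₂_C] at h
  have : algebraMap (C2 (k := k) q) (C3 (k := k) q) (g2 q) = (y3 q) ^ 3 + (z3 q) ^ 5 := by
    rw [g2, map_add, map_pow, map_pow]; rfl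
  rw [x3, add_assoc, ← this]
  rw [AdjoinRoot.algebraMap_eq]
  exact h

def φ : A k →ₐ[k] C3 (k := k) q := MvPolynomial.aeval ![x3 q, y3 q, z3 q]

lemma φ_ker : I' (k := k) q ≤ RingHom.ker (φ (k := k) q) := by
  rw [I', Ideal.span_le]
  rintro p hp
  simp only [Set.mem_insert_iff, Set.mem_singleton_iff] at hp
  rcases hp with rfl | rfl | rfl <;>
    simp [RingHom.mem_ker, φ, map_add, map_pow, y3_pow, z3_pow, x3_rel]

def φ' : Q (k := k) q →ₐ[k] C3 (k := k) q :=
  Ideal.Quotient.liftₐ _ (φ q) (fun a ha => φ_ker q ha)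

lemma φ'_mk (p : A k) : φ' (k := k) q (Ideal.Quotient.mk _ p) = φ q p := by
  rfl

lemma φ_X0 : φ (k := k) q (MvPolynomial.X 0) = x3 q := by simp [φ]
lemma φ_X1 : φ (k := k) q (MvPolynomial.X 1) = y3 q := by simp [φ]
lemma φ_X2 : φ (k := k) q (MvPolynomial.X 2) = z3 q := by simp [φ]

lemma ψ3_x3 : ψ3 (k := k) q (x3 q) = xQ q := AdjoinRoot.lift_root _
lemma ψ3_y3 : ψ3 (k := k) q (y3 q) = yQ q := by
  rw [y3, AdjoinRoot.algebraMap_eq, ψ3, AdjoinRoot.lift_of]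
  exact AdjoinRoot.lift_root _
lemma ψ3_z3 : ψ3 (k := k) q (z3 q) = zQ q := by
  rw [z3, AdjoinRoot.algebraMap_eq, ψ3, AdjoinRoot.lift_of, AdjoinRoot.algebraMap_eq,
    ψ2, AdjoinRoot.lift_of]
  exact AdjoinRoot.lift_root _

lemma left_inv : (ψ3 (k := k) q).comp (φ' q).toRingHom = RingHom.id (Q (k := k) q) := by
  apply Ideal.Quotient.ringHom_ext
  apply MvPolynomial.ringHom_ext
  · intro r
    show (ψ3 q) ((φ' q).toRingHom ((algebraMap k (Q q)) r)) = (algebraMap k (Q q)) r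
    rw [show (φ' (k := k) q).toRingHom ((algebraMap k (Q q)) r)
        = algebraMap k (C3 (k := k) q) r from (φ' q).commutes r]
    rw [IsScalarTower.algebraMap_apply k (C2 (k := k) q) (C3 (k := k) q),
      AdjoinRoot.algebraMap_eq, ψ3, AdjoinRoot.lift_of,
      IsScalarTower.algebraMap_apply k (C1 (k := k) q) (C2 (k := k) q),
      AdjoinRoot.algebraMap_eq, ψ2, AdjoinRoot.lift_of, ψ1, AdjoinRoot.algebraMap_eq,
      AdjoinRoot.lift_of]
  · intro i
    fin_cases i
    · show (ψ3 q) ((φ' q).toRingHom (xQ q)) = xQ q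
      rw [show (φ' (k := k) q).toRingHom (xQ q) = φ q (MvPolynomial.X 0) from φ'_mk q _,
        φ_X0, ψ3_x3]
    · show (ψ3 q) ((φ' q).toRingHom (yQ q)) = yQ q
      rw [show (φ' (k := k) q).toRingHom (yQ q) = φ q (MvPolynomial.X 1) from φ'_mk q _,
        φ_X1, ψ3_y3]
    · show (ψ3 q) ((φ' q).toRingHom (zQ q)) = zQ q
      rw [show (φ' (k := k) q).toRingHom (zQ q) = φ q (MvPolynomial.X 2) from φ'_mk q _,
        φ_X2, ψ3_z3]

lemma ψ3_of (c : C2 (k := k) q) : ψ3 q (AdjoinRoot.of _ c) = ψ2 q c := AdjoinRoot.lift_of _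
lemma ψ2_of (c : C1 (k := k) q) : ψ2 q (AdjoinRoot.of _ c) = ψ1 q c := AdjoinRoot.lift_of _
lemma ψ1_of (r : k) : ψ1 (k := k) q (AdjoinRoot.of _ r) = algebraMap k (Q q) r :=
  AdjoinRoot.lift_of _
lemma ψ1_root : ψ1 (k := k) q (AdjoinRoot.root _) = zQ q := AdjoinRoot.lift_root _
lemma ψ2_root : ψ2 (k := k) q (AdjoinRoot.root _) = yQ q := AdjoinRoot.lift_root _
lemma ψ3_root : ψ3 (k := k) q (AdjoinRoot.root _) = xQ q := AdjoinRoot.lift_root _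

lemma φ'_xQ : φ' (k := k) q (xQ q) = x3 q := by rw [xQ, φ'_mk, φ_X0]
lemma φ'_yQ : φ' (k := k) q (yQ q) = y3 q := by rw [yQ, φ'_mk, φ_X1]
lemma φ'_zQ : φ' (k := k) q (zQ q) = z3 q := by rw [zQ, φ'_mk, φ_X2]

lemma right_inv : (φ' (k := k) q).toRingHom.comp (ψ3 q) = RingHom.id (C3 (k := k) q) := by
  apply adjoinRoot_ringHom_ext
  · apply adjoinRoot_ringHom_ext
    · apply adjoinRoot_ringHom_ext
      · ext r
        simp only [RingHom.comp_apply, RingHom.id_apply]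
        rw [ψ3_of, ψ2_of, ψ1_of]
        rw [show (φ' (k := k) q).toRingHom ((algebraMap k (Q q)) r)
            = algebraMap k (C3 (k := k) q) r from (φ' q).commutes r]
        rw [← AdjoinRoot.algebraMap_eq, ← AdjoinRoot.algebraMap_eq, ← AdjoinRoot.algebraMap_eq,
          ← IsScalarTower.algebraMap_apply k (C1 (k := k) q) (C2 (k := k) q),
          ← IsScalarTower.algebraMap_apply k (C2 (k := k) q) (C3 (k := k) q)]
      · simp only [RingHom.comp_apply, RingHom.id_apply]
        rw [ψ3_of, ψ2_of, ψ1_root]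
        rw [show (φ' (k := k) q).toRingHom (zQ q) = z3 q from φ'_zQ q]
        rw [z3, AdjoinRoot.algebraMap_eq, AdjoinRoot.algebraMap_eq]
    · simp only [RingHom.comp_apply, RingHom.id_apply]
      rw [ψ3_of, ψ2_root]
      rw [show (φ' (k := k) q).toRingHom (yQ q) = y3 q from φ'_yQ q]
      rw [y3, AdjoinRoot.algebraMap_eq]
  · simp only [RingHom.comp_apply, RingHom.id_apply]
    rw [ψ3_root]
    rw [show (φ' (k := k) q).toRingHom (xQ q) = x3 q from φ'_xQ q]
    rw [x3]

def equivQC3 : Q (k := k) q ≃ₐ[k] C3 (k := k) q :=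
  AlgEquiv.ofBijective (φ' q)
    ⟨Function.LeftInverse.injective (g := ψ3 q) (fun x => RingHom.congr_fun (left_inv q) x),
     Function.RightInverse.surjective (g := ψ3 q) (fun x => RingHom.congr_fun (right_inv q) x)⟩

theorem finrank_Q (hq : 0 < q) : Module.finrank k (Q (k := k) q) = 2 * q ^ 2 := by
  rw [(equivQC3 (k := k) q).toLinearEquiv.finrank_eq]
  exact finrank_C3 q hq

end HK


end HKAux

/-- The Hilbert-Kunz function of the E₈ ring `k[X,Y,Z]/(X²+Y³+Z⁵)`
in characteristic 3 is `e ↦ 2·p^{2e}` for `e ≥ 1`. -/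
theorem stmt_3 (k : Type*) [Field k] [CharP k 3] (e : ℕ) (he : 1 ≤ e) :
    Module.finrank k (MvPolynomial (Fin 3) k ⧸
        (Ideal.span {(X 0 : MvPolynomial (Fin 3) k) ^ 2 + X 1 ^ 3 + X 2 ^ 5,
          X 0 ^ 3 ^ e, X 1 ^ 3 ^ e, X 2 ^ 3 ^ e} : Ideal (MvPolynomial (Fin 3) k)))
      = 2 * 9 ^ e := by
  obtain ⟨d, rfl⟩ : ∃ d, e = d + 1 := ⟨e - 1, (Nat.succ_pred_eq_of_pos he).symm⟩
  haveI : Fact (Nat.Prime 3) := ⟨by norm_num⟩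
  set q : ℕ := 3 ^ (d + 1) with hqdef
  set m : ℕ := 3 ^ d with hmdef
  set f : MvPolynomial (Fin 3) k := X 0 ^ 2 + X 1 ^ 3 + X 2 ^ 5 with hf
  set u : MvPolynomial (Fin 3) k := X 0 ^ m with hu
  set v : MvPolynomial (Fin 3) k := X 1 ^ m with hv
  set w : MvPolynomial (Fin 3) k := X 2 ^ m with hw
  have hfrob : f ^ m = u ^ 2 + v ^ 3 + w ^ 5 := by
    rw [hf, hmdef, add_pow_char_pow, add_pow_char_pow, hu, hv, hw, hmdef,
      ← pow_mul, ← pow_mul, ← pow_mul, ← pow_mul, ← pow_mul, ← pow_mul,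
      mul_comm 2, mul_comm 3, mul_comm 5]
  have hq : q = m * 3 := by rw [hqdef, hmdef, pow_succ]
  have hxu : (X 0 : MvPolynomial (Fin 3) k) ^ q = u ^ 3 := by rw [hq, pow_mul, hu]
  have hxv : (X 1 : MvPolynomial (Fin 3) k) ^ q = v ^ 3 := by rw [hq, pow_mul, hv]
  have hxw : (X 2 : MvPolynomial (Fin 3) k) ^ q = w ^ 3 := by rw [hq, pow_mul, hw]
  have key : (X 0 : MvPolynomial (Fin 3) k) ^ q
      = u * f ^ m - u * X 1 ^ q - (u * w ^ 2) * X 2 ^ q := by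
    rw [hfrob, hxu, hxv, hxw]; ring
  have hIeq : Ideal.span {f, (X 0 : MvPolynomial (Fin 3) k) ^ q, X 1 ^ q, X 2 ^ q}
      = I' (k := k) q := by
    apply le_antisymm
    · rw [Ideal.span_le]
      rintro p hp
      simp only [Set.mem_insert_iff, Set.mem_singleton_iff] at hp
      have hfmem : f ∈ I' (k := k) q := Ideal.subset_span (by left; rfl)
      have hymem : (X 1 : MvPolynomial (Fin 3) k) ^ q ∈ I' (k := k) q :=
        Ideal.subset_span (by right; left; rfl)
      have hzmem : (X 2 : MvPolynomial (Fin 3) k) ^ q ∈ I' (k := k) q :=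
        Ideal.subset_span (by right; right; rfl)
      rcases hp with rfl | rfl | rfl | rfl
      · exact hfmem
      · rw [key]
        exact sub_mem (sub_mem (Ideal.mul_mem_left _ _
            ((I' (k := k) q).pow_mem_of_mem hfmem m (by positivity)))
          (Ideal.mul_mem_left _ _ hymem)) (Ideal.mul_mem_left _ _ hzmem)
      · exact hymem
      · exact hzmem
    · rw [I', Ideal.span_le]
      rintro p hp
      simp only [Set.mem_insert_iff, Set.mem_singleton_iff] at hp
      rcases hp with rfl | rfl | rfl
      · exact Ideal.subset_span (by left; rfl)
      · exact Ideal.subset_span (by right; right; left; rfl)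
      · exact Ideal.subset_span (by right; right; right; rfl)
  rw [hIeq]
  rw [finrank_Q (k := k) q (by positivity)]
  rw [hqdef, ← pow_mul, mul_comm (d+1) 2, pow_mul]
  norm_num
end

section
/- Let k be a field of characteristic 2, n ≥ 2, and R = k[X,Y,Z]/(X² + Y^{n+1} + YZ²). Then for every e ≥ 1, dim_k R/(X^{2^e}, Y^{2^e}, Z^{2^e}) = 2 · 4^e. -/
set_option synthInstance.maxHeartbeats 1000000
set_option maxHeartbeats 1000000

open MvPolynomial

namespace Stmt9Aux

variable (k : Type*) [Field k] (q : ℕ)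

noncomputable abbrev A1 : Type _ := AdjoinRoot (Polynomial.X ^ q : Polynomial k)

noncomputable abbrev A2 : Type _ := AdjoinRoot (Polynomial.X ^ q : Polynomial (A1 k q))

noncomputable def yy : A2 k q := algebraMap (A1 k q) (A2 k q) (AdjoinRoot.root _)

noncomputable def zz : A2 k q := AdjoinRoot.root _

variable (n : ℕ)

noncomputable def cc : A2 k q := yy k q ^ (n + 1) + yy k q * zz k q ^ 2

noncomputable def g3 : Polynomial (A2 k q) := Polynomial.X ^ 2 + Polynomial.C (cc k q n)

noncomputable abbrev A3 : Type _ := AdjoinRoot (g3 k q n)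

lemma monic_g3 : (g3 k q n).Monic :=
  Polynomial.monic_X_pow_add_C _ (by norm_num)

lemma nontrivial_A1 (hq : q ≠ 0) : Nontrivial (A1 k q) :=
  AdjoinRoot.nontrivial _ (by
    rw [Polynomial.degree_X_pow]; exact_mod_cast hq)

lemma nontrivial_A2 (hq : q ≠ 0) : Nontrivial (A2 k q) := by
  haveI := nontrivial_A1 k q hq
  refine nontrivial_of_ne 1 0 ?_
  have : AdjoinRoot.mk (Polynomial.X ^ q : Polynomial (A1 k q)) 1 ≠ 0 :=
    AdjoinRoot.mk_ne_zero_of_degree_lt (Polynomial.monic_X_pow q) one_ne_zero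
      (by rw [Polynomial.degree_one, Polynomial.degree_X_pow]
          exact_mod_cast Nat.pos_of_ne_zero hq)
  simpa using this

lemma nontrivial_A3 (hq : q ≠ 0) : Nontrivial (A3 k q n) := by
  haveI := nontrivial_A2 k q hq
  refine nontrivial_of_ne 1 0 ?_
  have : AdjoinRoot.mk (g3 k q n) 1 ≠ 0 :=
    AdjoinRoot.mk_ne_zero_of_degree_lt (monic_g3 k q n) one_ne_zero
      (by rw [Polynomial.degree_one, g3,
            Polynomial.degree_add_eq_left_of_degree_lt, Polynomial.degree_X_pow]
          · norm_num
          · apply lt_of_le_of_lt (Polynomial.degree_C_le)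
            rw [Polynomial.degree_X_pow]; norm_num)
  simpa using this

lemma finrank_A1 : Module.finrank k (A1 k q) = q := by
  rw [(AdjoinRoot.powerBasis' (Polynomial.monic_X_pow q)).finrank]
  simp

lemma finrank_A2 (hq : q ≠ 0) : Module.finrank (A1 k q) (A2 k q) = q := by
  haveI := nontrivial_A1 k q hq
  rw [(AdjoinRoot.powerBasis' (Polynomial.monic_X_pow q)).finrank]
  simp

lemma finrank_A3 (hq : q ≠ 0) : Module.finrank (A2 k q) (A3 k q n) = 2 := by
  haveI := nontrivial_A2 k q hq
  rw [(AdjoinRoot.powerBasis' (monic_g3 k q n)).finrank]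
  rw [AdjoinRoot.powerBasis'_dim]
  simp [g3, Polynomial.natDegree_X_pow_add_C]

lemma finrank_k_A3 (hq : q ≠ 0) : Module.finrank k (A3 k q n) = q * q * 2 := by
  haveI := nontrivial_A1 k q hq
  haveI := nontrivial_A2 k q hq
  haveI : Module.Free k (A1 k q) :=
    Module.Free.of_basis (AdjoinRoot.powerBasis' (Polynomial.monic_X_pow q)).basis
  haveI : Module.Free (A1 k q) (A2 k q) :=
    Module.Free.of_basis (AdjoinRoot.powerBasis' (Polynomial.monic_X_pow q)).basis
  haveI : Module.Free (A2 k q) (A3 k q n) :=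
    Module.Free.of_basis (AdjoinRoot.powerBasis' (monic_g3 k q n)).basis
  rw [← Module.finrank_mul_finrank k (A2 k q) (A3 k q n), finrank_A3 k q n hq,
    ← Module.finrank_mul_finrank k (A1 k q) (A2 k q), finrank_A1, finrank_A2 k q hq]

end Stmt9Aux

namespace Stmt9Aux

variable {k : Type*} [Field k] {q n : ℕ}

lemma root1_pow : (AdjoinRoot.root (Polynomial.X ^ q : Polynomial k)) ^ q = 0 := by
  have := AdjoinRoot.eval₂_root (Polynomial.X ^ q : Polynomial k)
  simpa using this

lemma yy_pow : yy k q ^ q = 0 := by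
  rw [yy, ← map_pow, root1_pow, map_zero]

lemma zz_pow : zz k q ^ q = 0 := by
  have := AdjoinRoot.eval₂_root (Polynomial.X ^ q : Polynomial (A1 k q))
  simpa [zz] using this

lemma root3_sq : (AdjoinRoot.root (g3 k q n)) ^ 2
    + algebraMap (A2 k q) (A3 k q n) (cc k q n) = 0 := by
  show AdjoinRoot.mk (g3 k q n) Polynomial.X ^ 2
    + AdjoinRoot.mk (g3 k q n) (Polynomial.C (cc k q n)) = 0
  rw [← map_pow, ← map_add]
  exact AdjoinRoot.mk_self

section Main

variable (k q n)

noncomputable def φ0 : MvPolynomial (Fin 3) k →ₐ[k] A3 k q n :=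
  aeval ![AdjoinRoot.root _, algebraMap (A2 k q) (A3 k q n) (yy k q),
    algebraMap (A2 k q) (A3 k q n) (zz k q)]

noncomputable def JJ : Ideal (MvPolynomial (Fin 3) k) :=
  Ideal.span {(X 0 : MvPolynomial (Fin 3) k) ^ 2 + X 1 ^ (n + 1) + X 1 * X 2 ^ 2,
    X 1 ^ q, X 2 ^ q}

lemma JJ_le_ker : JJ k q n ≤ RingHom.ker (φ0 k q n).toRingHom := by
  rw [JJ, Ideal.span_le]
  rintro p hp
  simp only [Set.mem_insert_iff, Set.mem_singleton_iff] at hp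
  have hmem : ∀ r, (φ0 k q n) r = 0 → r ∈ RingHom.ker (φ0 k q n).toRingHom := fun r hr => hr
  rcases hp with rfl | rfl | rfl
  · apply hmem
    have h0 := root3_sq (k := k) (q := q) (n := n)
    simp only [φ0, map_add, map_pow, map_mul, aeval_X, Matrix.cons_val_zero,
      Matrix.cons_val_one, Matrix.head_cons, Matrix.cons_val_two, Matrix.tail_cons, cc,
      map_add, map_mul, map_pow] at h0 ⊢
    linear_combination h0
  · apply hmem
    rw [φ0]
    rw [map_pow, aeval_X]
    simp only [Matrix.cons_val_one, Matrix.head_cons, Matrix.cons_val_zero]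
    rw [← map_pow, yy_pow, map_zero]
  · apply hmem
    rw [φ0]
    rw [map_pow, aeval_X]
    simp only [Matrix.cons_val_two, Matrix.tail_cons, Matrix.head_cons]
    rw [← map_pow, zz_pow, map_zero]

noncomputable def φ : (MvPolynomial (Fin 3) k ⧸ JJ k q n) →ₐ[k] A3 k q n :=
  Ideal.Quotient.liftₐ (JJ k q n) (φ0 k q n) (fun _ ha => JJ_le_ker k q n ha)

lemma φ_mk (p : MvPolynomial (Fin 3) k) :
    φ k q n (Ideal.Quotient.mk (JJ k q n) p) = φ0 k q n p := by
  exact (Ideal.Quotient.liftₐ_apply _ _ _ _).trans (Ideal.Quotient.lift_mk _ _ _)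

lemma φ_mk' (p : MvPolynomial (Fin 3) k) :
    (φ k q n).toRingHom (Ideal.Quotient.mk (JJ k q n) p) = φ0 k q n p :=
  φ_mk k q n p

section Psi

lemma ybar_pow :
    Polynomial.eval₂ (algebraMap k (MvPolynomial (Fin 3) k ⧸ JJ k q n))
      (Ideal.Quotient.mk (JJ k q n) (X 1)) (Polynomial.X ^ q : Polynomial k) = 0 := by
  rw [Polynomial.eval₂_X_pow, ← map_pow, Ideal.Quotient.eq_zero_iff_mem]
  exact Ideal.subset_span (by simp [JJ])

noncomputable def ψ1 : A1 k q →+* (MvPolynomial (Fin 3) k ⧸ JJ k q n) :=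
  AdjoinRoot.lift (algebraMap k _) (Ideal.Quotient.mk (JJ k q n) (X 1)) (ybar_pow k q n)

lemma zbar_pow :
    Polynomial.eval₂ (ψ1 k q n) (Ideal.Quotient.mk (JJ k q n) (X 2))
      (Polynomial.X ^ q : Polynomial (A1 k q)) = 0 := by
  rw [Polynomial.eval₂_X_pow, ← map_pow, Ideal.Quotient.eq_zero_iff_mem]
  exact Ideal.subset_span (by simp [JJ])

noncomputable def ψ2 : A2 k q →+* (MvPolynomial (Fin 3) k ⧸ JJ k q n) :=
  AdjoinRoot.lift (ψ1 k q n) (Ideal.Quotient.mk (JJ k q n) (X 2)) (zbar_pow k q n)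

lemma ψ2_yy : ψ2 k q n (yy k q) = Ideal.Quotient.mk (JJ k q n) (X 1) := by
  rw [yy, AdjoinRoot.algebraMap_eq, ψ2, AdjoinRoot.lift_of, ψ1, AdjoinRoot.lift_root]

lemma ψ2_zz : ψ2 k q n (zz k q) = Ideal.Quotient.mk (JJ k q n) (X 2) := by
  rw [zz, ψ2, AdjoinRoot.lift_root]

lemma xbar_g3 :
    Polynomial.eval₂ (ψ2 k q n) (Ideal.Quotient.mk (JJ k q n) (X 0)) (g3 k q n) = 0 := by
  have h0 : Ideal.Quotient.mk (JJ k q n)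
      ((X 0 : MvPolynomial (Fin 3) k) ^ 2 + X 1 ^ (n + 1) + X 1 * X 2 ^ 2) = 0 := by
    rw [Ideal.Quotient.eq_zero_iff_mem]
    exact Ideal.subset_span (by simp [JJ])
  simp only [map_add, map_pow, map_mul] at h0
  simp only [g3, cc, map_add, map_mul, map_pow, Polynomial.eval₂_add,
    Polynomial.eval₂_X_pow, Polynomial.eval₂_X, Polynomial.eval₂_mul, Polynomial.eval₂_pow,
    Polynomial.eval₂_C, ψ2_yy, ψ2_zz]
  linear_combination h0

noncomputable def ψ3 : A3 k q n →+* (MvPolynomial (Fin 3) k ⧸ JJ k q n) :=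
  AdjoinRoot.lift (ψ2 k q n) (Ideal.Quotient.mk (JJ k q n) (X 0)) (xbar_g3 k q n)

lemma left_inv : (ψ3 k q n).comp (φ k q n).toRingHom = RingHom.id _ := by
  refine Ideal.Quotient.ringHom_ext (MvPolynomial.ringHom_ext ?_ ?_)
  · intro r
    simp only [RingHom.comp_apply, RingHom.id_apply]
    rw [φ_mk', φ0, aeval_C]
    rw [AdjoinRoot.algebraMap_eq', RingHom.comp_apply, ψ3, AdjoinRoot.lift_of]
    rw [AdjoinRoot.algebraMap_eq', RingHom.comp_apply, ψ2, AdjoinRoot.lift_of]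
    rw [AdjoinRoot.algebraMap_eq, ψ1, AdjoinRoot.lift_of]
    rfl
  · intro i
    simp only [RingHom.comp_apply, RingHom.id_apply]
    fin_cases i
    · rw [φ_mk', φ0, aeval_X]
      show ψ3 k q n (AdjoinRoot.root _) = _
      rw [ψ3, AdjoinRoot.lift_root]
      rfl
    · rw [φ_mk', φ0, aeval_X]
      show ψ3 k q n (algebraMap (A2 k q) (A3 k q n) (yy k q)) = _
      rw [AdjoinRoot.algebraMap_eq, ψ3, AdjoinRoot.lift_of, ψ2_yy]
      rfl
    · rw [φ_mk', φ0, aeval_X]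
      show ψ3 k q n (algebraMap (A2 k q) (A3 k q n) (zz k q)) = _
      rw [AdjoinRoot.algebraMap_eq, ψ3, AdjoinRoot.lift_of, ψ2_zz]
      rfl

lemma right_inv1 :
    (φ k q n).toRingHom.comp (ψ1 k q n) = algebraMap (A1 k q) (A3 k q n) := by
  refine RingHom.ext fun x => ?_
  induction x using AdjoinRoot.induction_on with
  | ih p =>
    rw [RingHom.comp_apply, ψ1, AdjoinRoot.lift_mk, Polynomial.hom_eval₂]
    have h1 : (φ k q n).toRingHom.comp (algebraMap k _) = algebraMap k (A3 k q n) :=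
      (φ k q n).comp_algebraMap
    rw [h1]
    have h2 : (AdjoinRoot.mk (Polynomial.X ^ q : Polynomial k) p : A1 k q)
        = Polynomial.eval₂ (algebraMap k (A1 k q)) (AdjoinRoot.root _) p := by
      rw [← Polynomial.aeval_def, AdjoinRoot.aeval_eq]
    rw [h2, Polynomial.hom_eval₂, ← IsScalarTower.algebraMap_eq]
    congr 1
    · rw [φ_mk', φ0, aeval_X]
      show algebraMap (A2 k q) (A3 k q n) (yy k q) = _
      rw [yy, ← IsScalarTower.algebraMap_apply]

lemma right_inv2 :
    (φ k q n).toRingHom.comp (ψ2 k q n) = algebraMap (A2 k q) (A3 k q n) := by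
  refine RingHom.ext fun x => ?_
  induction x using AdjoinRoot.induction_on with
  | ih p =>
    rw [RingHom.comp_apply, ψ2, AdjoinRoot.lift_mk, Polynomial.hom_eval₂, right_inv1]
    have h2 : (AdjoinRoot.mk (Polynomial.X ^ q : Polynomial (A1 k q)) p : A2 k q)
        = Polynomial.eval₂ (algebraMap (A1 k q) (A2 k q)) (AdjoinRoot.root _) p := by
      rw [← Polynomial.aeval_def, AdjoinRoot.aeval_eq]
    rw [h2, Polynomial.hom_eval₂, ← IsScalarTower.algebraMap_eq]
    congr 1
    rw [φ_mk', φ0, aeval_X]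
    show algebraMap (A2 k q) (A3 k q n) (zz k q) = _
    rw [zz]

lemma right_inv3 :
    (φ k q n).toRingHom.comp (ψ3 k q n) = RingHom.id (A3 k q n) := by
  refine RingHom.ext fun x => ?_
  induction x using AdjoinRoot.induction_on with
  | ih p =>
    rw [RingHom.comp_apply, ψ3, AdjoinRoot.lift_mk, Polynomial.hom_eval₂, right_inv2,
      RingHom.id_apply]
    have h2 : (AdjoinRoot.mk (g3 k q n) p : A3 k q n)
        = Polynomial.eval₂ (algebraMap (A2 k q) (A3 k q n)) (AdjoinRoot.root _) p := by
      rw [← Polynomial.aeval_def, AdjoinRoot.aeval_eq]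
    rw [h2]
    congr 1
    rw [φ_mk', φ0, aeval_X]
    rfl

noncomputable def theEquiv : (MvPolynomial (Fin 3) k ⧸ JJ k q n) ≃ₐ[k] A3 k q n :=
  AlgEquiv.ofBijective (φ k q n)
    ⟨Function.LeftInverse.injective (g := ψ3 k q n)
        (fun x => RingHom.congr_fun (left_inv k q n) x),
      Function.RightInverse.surjective (g := ψ3 k q n)
        (fun x => RingHom.congr_fun (right_inv3 k q n) x)⟩

lemma finrank_quot (hq : q ≠ 0) :
    Module.finrank k (MvPolynomial (Fin 3) k ⧸ JJ k q n) = q * q * 2 := by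
  rw [(theEquiv k q n).toLinearEquiv.finrank_eq, finrank_k_A3 k q n hq]

end Psi

end Main

end Stmt9Aux

namespace Stmt9Aux

lemma span_eq {k : Type*} [Field k] [CharP k 2] (n e : ℕ) (hn : 2 ≤ n) (he : 1 ≤ e) :
    Ideal.span {(X 0 : MvPolynomial (Fin 3) k) ^ 2 + X 1 ^ (n + 1) + X 1 * X 2 ^ 2,
        X 0 ^ 2 ^ e, X 1 ^ 2 ^ e, X 2 ^ 2 ^ e} =
      JJ k (2 ^ e) n := by
  haveI : Fact (Nat.Prime 2) := ⟨Nat.prime_two⟩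
  set f : MvPolynomial (Fin 3) k := X 0 ^ 2 + X 1 ^ (n + 1) + X 1 * X 2 ^ 2 with hf
  rw [JJ]
  set t := 2 ^ (e - 1) with ht
  have h2e : 2 ^ e = 2 * t := by
    rw [ht, ← pow_succ']
    congr 1
    omega
  apply le_antisymm
  · rw [Ideal.span_le]
    rintro p hp
    simp only [Set.mem_insert_iff, Set.mem_singleton_iff] at hp
    have hfmem : f ∈ Ideal.span {f, (X 1 : MvPolynomial (Fin 3) k) ^ 2 ^ e, X 2 ^ 2 ^ e} :=
      Ideal.subset_span (by simp)
    have hymem : (X 1 : MvPolynomial (Fin 3) k) ^ 2 ^ e ∈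
        Ideal.span {f, (X 1 : MvPolynomial (Fin 3) k) ^ 2 ^ e, X 2 ^ 2 ^ e} :=
      Ideal.subset_span (by simp)
    have hzmem : (X 2 : MvPolynomial (Fin 3) k) ^ 2 ^ e ∈
        Ideal.span {f, (X 1 : MvPolynomial (Fin 3) k) ^ 2 ^ e, X 2 ^ 2 ^ e} :=
      Ideal.subset_span (by simp)
    rcases hp with rfl | rfl | rfl | rfl
    · exact hfmem
    · -- the key case: X 0 ^ 2 ^ e
      have hkey : f ^ t = X 0 ^ 2 ^ e + X 1 ^ ((n + 1) * t)
          + X 1 ^ t * X 2 ^ (2 ^ e) := by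
        rw [hf, ht, add_pow_char_pow, add_pow_char_pow, ← pow_mul, ← pow_mul, mul_pow,
          ← pow_mul, ← ht, h2e]
      have hx : (X 0 : MvPolynomial (Fin 3) k) ^ 2 ^ e
          = f ^ t - X 1 ^ ((n + 1) * t) - X 1 ^ t * X 2 ^ (2 ^ e) := by
        rw [hkey]; ring
      rw [hx]
      apply Submodule.sub_mem
      apply Submodule.sub_mem
      · exact Ideal.pow_mem_of_mem _ hfmem t (by positivity)
      · have hle : 2 ^ e ≤ (n + 1) * t := by
          calc 2 ^ e = 2 * t := h2e
          _ ≤ (n + 1) * t := Nat.mul_le_mul_right t (by omega)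
        have hsplit : (X 1 : MvPolynomial (Fin 3) k) ^ ((n + 1) * t)
            = X 1 ^ 2 ^ e * X 1 ^ ((n + 1) * t - 2 ^ e) := by
          rw [← pow_add]
          congr 1
          omega
        rw [hsplit]
        exact Ideal.mul_mem_right _ _ hymem
      · exact Ideal.mul_mem_left _ _ hzmem
    · exact hymem
    · exact hzmem
  · rw [Ideal.span_le]
    rintro p hp
    simp only [Set.mem_insert_iff, Set.mem_singleton_iff] at hp
    rcases hp with rfl | rfl | rfl
    · exact Ideal.subset_span (by simp [hf])
    · exact Ideal.subset_span (by simp)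
    · exact Ideal.subset_span (by simp)

end Stmt9Aux

/-- The Hilbert-Kunz function of the D_{n+2} ring
`k[X,Y,Z]/(X² + Y^{n+1} + YZ²)` in characteristic 2 is `e ↦ 2·4^e` for `e ≥ 1`. -/
theorem stmt_9 (k : Type*) [Field k] [CharP k 2] (n : ℕ) (hn : 2 ≤ n)
    (e : ℕ) (he : 1 ≤ e) :
    Module.finrank k (MvPolynomial (Fin 3) k ⧸
        (Ideal.span {(X 0 : MvPolynomial (Fin 3) k) ^ 2 + X 1 ^ (n + 1) +
            X 1 * X 2 ^ 2,
          X 0 ^ 2 ^ e, X 1 ^ 2 ^ e, X 2 ^ 2 ^ e} : Ideal (MvPolynomial (Fin 3) k)))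
      = 2 * 4 ^ e := by
  rw [Stmt9Aux.span_eq n e hn he]
  rw [Stmt9Aux.finrank_quot k (2 ^ e) n (by positivity)]
  rw [show (4 : ℕ) = 2 * 2 by norm_num, mul_pow]
  ring
end

section
/- Let R be a standard-graded affine domain over a field k, and f, f₁, …, fₙ homogeneous elements with f, fₙ an R-regular sequence. Then Syz_R(f·f₁, …, f·f_{n-1}, fₙ) ≅ Syz_R(f₁, …, fₙ)(-deg f) as graded R-modules. -/
/-- The linear map `(a₁,…,aₙ) ↦ Σ aᵢ·gᵢ`; the syzygy module
`Syz_R(g₁,…,gₙ)` is its kernel. -/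
noncomputable def syzMap {R : Type*} [CommRing R] {n : ℕ} (g : Fin n → R) :
    (Fin n → R) →ₗ[R] R :=
  ∑ i, (LinearMap.proj i : (Fin n → R) →ₗ[R] R).smulRight (g i)

theorem syzMap_apply {R : Type*} [CommRing R] {n : ℕ} (g : Fin n → R) (v : Fin n → R) :
    syzMap g v = ∑ i, v i * g i := by
  simp [syzMap]

/-- If `f ∈ 𝒜 df` is a nonzerodivisor and `f * c` is homogeneous of degree `m`,
then `c` is homogeneous of degree `m - df`. -/
theorem homog_of_mul_homog {k R : Type*} [Field k] [CommRing R] [Algebra k R]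
    (𝒜 : ℤ → Submodule k R) [GradedAlgebra 𝒜] {f : R} {df m : ℤ} (hf : f ∈ 𝒜 df)
    (hreg : IsSMulRegular R f) {c : R} (h : f * c ∈ 𝒜 m) : c ∈ 𝒜 (m - df) := by
  have h1 : (DirectSum.decompose 𝒜 (f * c) (df + (m - df)) : R)
      = f * DirectSum.decompose 𝒜 c (m - df) :=
    DirectSum.coe_decompose_mul_add_of_left_mem 𝒜 hf
  rw [show df + (m - df) = m by ring, DirectSum.decompose_of_mem_same 𝒜 h] at h1
  have h2 : c = (DirectSum.decompose 𝒜 c (m - df) : R) :=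
    hreg (by simpa [smul_eq_mul] using h1)
  rw [h2]
  exact (DirectSum.decompose 𝒜 c (m - df)).2

/-- Over a standard-graded affine domain `R` over `k`,
for homogeneous elements `f, g₁, …, g_{n-1}, gₗ` such that `f, gₗ` is an
`R`-regular sequence (`f` is a nonzerodivisor and `gₗ` is a nonzerodivisor
mod `f`), there is an isomorphism of graded `R`-modules
`Syz_R(f·g₁,…,f·g_{n-1}, gₗ) ≅ Syz_R(g₁,…,g_{n-1},gₗ)(-df)`. -/
theorem stmt_11 {k R : Type*} [Field k] [CommRing R] [IsDomain R] [Algebra k R]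
    [Algebra.FiniteType k R] (𝒜 : ℤ → Submodule k R) [GradedAlgebra 𝒜]
    (hstd : Algebra.adjoin k ((𝒜 1 : Submodule k R) : Set R) = ⊤)
    {n : ℕ} (f : R) (df : ℤ) (hf : f ∈ 𝒜 df)
    (g : Fin n → R) (d : Fin n → ℤ) (hg : ∀ i, g i ∈ 𝒜 (d i))
    (gl : R) (dl : ℤ) (hgl : gl ∈ 𝒜 dl)
    (hreg₁ : IsSMulRegular R f)
    (hreg₂ : IsSMulRegular (R ⧸ Ideal.span {f})
      (Ideal.Quotient.mk (Ideal.span {f}) gl)) :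
    ∃ e : LinearMap.ker (syzMap (Fin.snoc (fun i => f * g i) gl)) ≃ₗ[R]
        LinearMap.ker (syzMap (Fin.snoc g gl)),
      (∀ (m : ℤ) (v : LinearMap.ker (syzMap (Fin.snoc (fun i => f * g i) gl))),
        (∀ i, (v : Fin (n + 1) → R) i ∈
            𝒜 (m - (Fin.snoc (fun i => df + d i) dl : Fin (n+1) → ℤ) i)) →
          ∀ i, (e v : Fin (n + 1) → R) i ∈ 𝒜 (m - df - (Fin.snoc d dl : Fin (n+1) → ℤ) i)) ∧
      (∀ (m : ℤ) (w : LinearMap.ker (syzMap (Fin.snoc g gl))),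
        (∀ i, (w : Fin (n + 1) → R) i ∈ 𝒜 (m - df - (Fin.snoc d dl : Fin (n+1) → ℤ) i)) →
          ∀ i, (e.symm w : Fin (n + 1) → R) i ∈
            𝒜 (m - (Fin.snoc (fun i => df + d i) dl : Fin (n+1) → ℤ) i)) := by
  classical
  -- division by f
  let div : R → R := fun b => if h : f ∣ b then h.choose else 0
  have hdiv : ∀ b, f ∣ b → f * div b = b := by
    intro b h
    simp only [div, dif_pos h]
    exact h.choose_spec.symm
  have hdiv2 : ∀ x, div (f * x) = x := by
    intro x
    apply hreg₁
    show f • div (f * x) = f • x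
    simpa [smul_eq_mul] using hdiv (f * x) ⟨x, rfl⟩
  -- sum manipulation
  have hs : ∀ w : Fin (n+1) → R,
      ∑ i : Fin n, w i.castSucc * (f * g i) = f * ∑ i : Fin n, w i.castSucc * g i := by
    intro w
    rw [Finset.mul_sum]
    exact Finset.sum_congr rfl fun i _ => by ring
  have hsyz : ∀ (h : Fin (n+1) → R) (v : Fin (n+1) → R),
      syzMap h v = ∑ i : Fin n, v i.castSucc * h i.castSucc + v (Fin.last n) * h (Fin.last n) := by
    intro h v; rw [syzMap_apply, Fin.sum_univ_castSucc]
  -- divisibility of last coordinate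
  have hdvd : ∀ v : Fin (n+1) → R, syzMap (Fin.snoc (fun i => f * g i) gl) v = 0 →
      f ∣ v (Fin.last n) := by
    intro v hv
    rw [hsyz] at hv
    simp only [Fin.snoc_castSucc, Fin.snoc_last] at hv
    rw [hs] at hv
    have h1 : v (Fin.last n) * gl ∈ Ideal.span {f} :=
      Ideal.mem_span_singleton.mpr ⟨-∑ i : Fin n, v i.castSucc * g i, by linear_combination hv⟩
    have h2 : Ideal.Quotient.mk (Ideal.span {f}) gl
        * Ideal.Quotient.mk (Ideal.span {f}) (v (Fin.last n)) = 0 := by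
      rw [← map_mul, mul_comm, Ideal.Quotient.eq_zero_iff_mem]
      exact h1
    have h3 : Ideal.Quotient.mk (Ideal.span {f}) (v (Fin.last n)) = 0 := by
      apply hreg₂
      simpa [smul_eq_mul] using h2
    exact Ideal.mem_span_singleton.mp (Ideal.Quotient.eq_zero_iff_mem.mp h3)
  -- kernel memberships
  have memG : ∀ v : Fin (n+1) → R, syzMap (Fin.snoc (fun i => f * g i) gl) v = 0 →
      syzMap (Fin.snoc g gl)
        (Fin.snoc (fun i => v i.castSucc) (div (v (Fin.last n)))) = 0 := by
    intro v hv
    have hd := hdiv _ (hdvd v hv)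
    rw [hsyz] at hv ⊢
    simp only [Fin.snoc_castSucc, Fin.snoc_last] at hv ⊢
    rw [hs] at hv
    apply hreg₁
    show f • _ = f • (0 : R)
    simp only [smul_eq_mul, mul_zero]
    linear_combination hv + gl * hd
  have memF : ∀ w : Fin (n+1) → R, syzMap (Fin.snoc g gl) w = 0 →
      syzMap (Fin.snoc (fun i => f * g i) gl)
        (Fin.snoc (fun i => w i.castSucc) (f * w (Fin.last n))) = 0 := by
    intro w hw
    rw [hsyz] at hw ⊢
    simp only [Fin.snoc_castSucc, Fin.snoc_last] at hw ⊢
    rw [hs]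
    linear_combination f * hw
  refine ⟨{
      toFun := fun v => ⟨Fin.snoc (fun i => (v : Fin (n+1) → R) i.castSucc)
          (div ((v : Fin (n+1) → R) (Fin.last n))),
        LinearMap.mem_ker.mpr (memG _ (LinearMap.mem_ker.mp v.2))⟩
      invFun := fun w => ⟨Fin.snoc (fun i => (w : Fin (n+1) → R) i.castSucc)
          (f * (w : Fin (n+1) → R) (Fin.last n)),
        LinearMap.mem_ker.mpr (memF _ (LinearMap.mem_ker.mp w.2))⟩
      map_add' := ?_
      map_smul' := ?_
      left_inv := ?_
      right_inv := ?_ }, ?_, ?_⟩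
  · intro v w
    ext j
    refine Fin.lastCases ?_ (fun i => ?_) j
    · have h1 := hdvd _ (LinearMap.mem_ker.mp v.2)
      have h2 := hdvd _ (LinearMap.mem_ker.mp w.2)
      simp only [Submodule.coe_add, Pi.add_apply, Fin.snoc_last]
      apply hreg₁
      show f • _ = f • _
      simp only [smul_eq_mul, mul_add]
      rw [hdiv _ h1, hdiv _ h2, hdiv _ (dvd_add h1 h2)]
    · simp [Fin.snoc_castSucc]
  · intro r v
    ext j
    refine Fin.lastCases ?_ (fun i => ?_) j
    · have h1 := hdvd _ (LinearMap.mem_ker.mp v.2)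
      simp only [SetLike.val_smul, Pi.smul_apply, Fin.snoc_last, smul_eq_mul,
        RingHom.id_apply]
      apply hreg₁
      show f • _ = f • _
      simp only [smul_eq_mul]
      rw [hdiv _ (h1.mul_left r)]
      have := hdiv _ h1
      linear_combination (-r) * this
    · simp [Fin.snoc_castSucc]
  · intro v
    ext j
    refine Fin.lastCases ?_ (fun i => ?_) j
    · simp only [Fin.snoc_last]
      exact hdiv _ (hdvd _ (LinearMap.mem_ker.mp v.2))
    · simp [Fin.snoc_castSucc]
  · intro w
    ext j
    refine Fin.lastCases ?_ (fun i => ?_) j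
    · simp only [Fin.snoc_last]
      exact hdiv2 _
    · simp [Fin.snoc_castSucc]
  · intro m v hv i
    simp only [LinearEquiv.coe_mk, LinearMap.coe_mk, AddHom.coe_mk]
    refine Fin.lastCases ?_ (fun j => ?_) i
    · simp only [Fin.snoc_last]
      have h1 := hv (Fin.last n)
      simp only [Fin.snoc_last] at h1
      have h2 : f * div ((v : Fin (n+1) → R) (Fin.last n))
          = (v : Fin (n+1) → R) (Fin.last n) := hdiv _ (hdvd _ (LinearMap.mem_ker.mp v.2))
      have h3 := homog_of_mul_homog 𝒜 hf hreg₁ (h2.symm ▸ h1)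
      rwa [show m - dl - df = m - df - dl by ring] at h3
    · simp only [Fin.snoc_castSucc]
      have h1 := hv j.castSucc
      simp only [Fin.snoc_castSucc] at h1
      rwa [show m - df - d j = m - (df + d j) by ring]
  · intro m w hw i
    simp only [LinearEquiv.coe_symm_mk]
    refine Fin.lastCases ?_ (fun j => ?_) i
    · simp only [Fin.snoc_last]
      have h1 := hw (Fin.last n)
      simp only [Fin.snoc_last] at h1
      have := SetLike.mul_mem_graded hf h1
      rwa [show df + (m - df - dl) = m - dl by ring] at this
    · simp only [Fin.snoc_castSucc]
      have h1 := hw j.castSucc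
      simp only [Fin.snoc_castSucc] at h1
      rwa [show m - (df + d j) = m - df - d j by ring]
end

section
/- Let k be a field of characteristic p > 0 with p ≡ 1 (mod 60), and write p = 60l + 1. Then Han's δ-function satisfies δ((p-1)/2, p/3, p/5) = 2/15; equivalently, for the split Syz_{k[Y,Z]}((Y³+Z⁵)^{(p-1)/2}, Y^p, Z^p) ≅ k[Y,Z](m) ⊕ k[Y,Z](n) with k[Y,Z] graded by deg Y = 10, deg Z = 6, one has |m - n| = 4. -/
open Polynomial

namespace Stmt15

theorem core_vanish {k : Type*} [Field k] (p : ℕ) (hp : p.Prime) [CharP k p] :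
    ∀ (c n a : ℕ) (f : k[X]), f.natDegree < c → n + c ≤ p → a + c ≤ n + 1 →
      (∀ j, a ≤ j → j < a + c → (f * (1 + X) ^ n).coeff j = 0) → f = 0 := by
  intro c
  induction c with
  | zero => intro n a f hdeg; omega
  | succ c ih =>
    intro n a f hdeg hnc hac hvan
    have hd : (1 + X : k[X]) * derivative ((1 + X : k[X]) ^ n) = (n : k[X]) * (1 + X) ^ n := by
      have h1 : derivative ((1 + X : k[X]) ^ (n + 1)) = ((n : k[X]) + 1) * (1 + X) ^ n := by
        rw [derivative_pow]
        simp [Polynomial.C_eq_natCast]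
        try ring
      have h2 : derivative ((1 + X : k[X]) ^ (n + 1)) =
          (1 + X) ^ n + (1 + X) * derivative ((1 + X : k[X]) ^ n) := by
        rw [pow_succ', derivative_mul]
        simp
        try ring
      rw [h1] at h2
      linear_combination -h2
    have key : derivative f * (1 + X : k[X]) ^ (n + 1) =
        (1 + X) * derivative (f * (1 + X) ^ n) - (n : k[X]) * (f * (1 + X) ^ n) := by
      rw [derivative_mul]
      have : (1 + X : k[X]) * (derivative f * (1 + X) ^ n + f * derivative ((1 + X) ^ n))
          = derivative f * (1 + X) ^ (n + 1) + f * ((1 + X) * derivative ((1 + X : k[X]) ^ n)) := by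
        ring
      rw [this, hd]
      ring
    have hvan' : ∀ j, a ≤ j → j < a + c → (derivative f * (1 + X : k[X]) ^ (n + 1)).coeff j = 0 := by
      intro j hj1 hj2
      rw [key]
      have e2 : (derivative (f * (1 + X : k[X]) ^ n)).coeff j = 0 := by
        rw [coeff_derivative, hvan (j + 1) (by omega) (by omega), zero_mul]
      have e3 : (X * derivative (f * (1 + X : k[X]) ^ n)).coeff j = 0 := by
        rcases j with _ | j'
        · simp
        · rw [coeff_X_mul, coeff_derivative, hvan (j' + 1) (by omega) (by omega), zero_mul]
      rw [coeff_sub, add_mul, one_mul, coeff_add, e2, e3, coeff_natCast_mul]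
      rw [hvan j (by omega) (by omega), mul_zero, add_zero, sub_zero]
    have hdf : derivative f = 0 := by
      rcases Nat.eq_zero_or_pos c with hc0 | hcpos
      · subst hc0
        have h0 : f.natDegree = 0 := by omega
        rw [Polynomial.eq_C_of_natDegree_eq_zero h0]
        simp
      · refine ih (n + 1) a (derivative f) ?_ (by omega) (by omega) hvan'
        rcases Nat.eq_zero_or_pos f.natDegree with h0 | hpos
        · rw [Polynomial.eq_C_of_natDegree_eq_zero h0]
          simpa using hcpos
        · exact lt_of_lt_of_le (Polynomial.natDegree_derivative_lt (by omega)) (by omega)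
    have hconst : f = C (f.coeff 0) := by
      ext m
      rcases Nat.eq_zero_or_pos m with rfl | hm
      · simp
      · rw [coeff_C, if_neg (by omega)]
        by_cases hbig : f.natDegree < m
        · exact Polynomial.coeff_eq_zero_of_natDegree_lt hbig
        · push_neg at hbig
          have hder := congrArg (fun g => Polynomial.coeff g (m - 1)) hdf
          simp only [coeff_derivative, coeff_zero] at hder
          have hcast : ((m - 1 : ℕ) : k) + 1 = ((m : ℕ) : k) := by
            have : ((m - 1) + 1 : ℕ) = m := by omega
            exact_mod_cast congrArg (Nat.cast : ℕ → k) this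
          rw [hcast] at hder
          have hm1 : m - 1 + 1 = m := by omega
          rw [hm1] at hder
          rcases mul_eq_zero.mp hder with h | h
          · exact h
          · exfalso
            have hdvd : p ∣ m := (CharP.cast_eq_zero_iff k p m).mp h
            have : p ≤ m := Nat.le_of_dvd hm hdvd
            omega
    have ha : a ≤ n := by omega
    have hchoose : ((n.choose a : k)) ≠ 0 := by
      intro h0
      have hdvd : p ∣ n.choose a := (CharP.cast_eq_zero_iff k p _).mp h0
      have h1 : n.choose a * a.factorial * (n - a).factorial = n.factorial :=
        Nat.choose_mul_factorial_mul_factorial ha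
      have : p ∣ n.factorial := h1 ▸ Dvd.dvd.mul_right (Dvd.dvd.mul_right hdvd _) _
      have := (Nat.Prime.dvd_factorial hp).mp this
      omega
    have hcoeffa : (f * (1 + X : k[X]) ^ n).coeff a = f.coeff 0 * (n.choose a : k) := by
      conv_lhs => rw [hconst]
      rw [Polynomial.coeff_C_mul, Polynomial.coeff_one_add_X_pow]
    have hva := hvan a (le_refl a) (by omega)
    rw [hcoeffa] at hva
    rcases mul_eq_zero.mp hva with h | h
    · rw [hconst, h, map_zero]
    · exact absurd h hchoose


/-- the weight vector -/
abbrev wt : Fin 2 → ℤ := ![10, 6]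

variable {k : Type*} [Field k]

/-- convenient constructor for exponents of 2-variable monomials -/
noncomputable def fp (a b : ℕ) : Fin 2 →₀ ℕ := Finsupp.single 0 a + Finsupp.single 1 b

@[simp] lemma fp_apply0 (a b : ℕ) : fp a b 0 = a := by
  simp [fp, Finsupp.single_apply]

@[simp] lemma fp_apply1 (a b : ℕ) : fp a b 1 = b := by
  simp [fp, Finsupp.single_apply]

lemma eq_fp {m : Fin 2 →₀ ℕ} {a b : ℕ} (h0 : m 0 = a) (h1 : m 1 = b) : m = fp a b := by
  ext i
  fin_cases i
  · simpa using h0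
  · simpa using h1

lemma weight_two (d : Fin 2 →₀ ℕ) :
    (Finsupp.weight wt) d = 10 * (d 0 : ℤ) + 6 * (d 1 : ℤ) := by
  rw [Finsupp.weight_apply, Finsupp.sum_fintype _ _ (fun i => by simp)]
  rw [Fin.sum_univ_two]
  simp [Matrix.cons_val_zero, Matrix.cons_val_one]
  ring

/-- membership in the monomial ideal (Y^p, Z^p) kills low coefficients -/
lemma coeff_eq_zero_of_mem_span {p : ℕ} {r : MvPolynomial (Fin 2) k}
    (hr : r ∈ Ideal.span {(MvPolynomial.X 0 : MvPolynomial (Fin 2) k) ^ p,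
      (MvPolynomial.X 1 : MvPolynomial (Fin 2) k) ^ p})
    (m : Fin 2 →₀ ℕ) (h0 : m 0 < p) (h1 : m 1 < p) : MvPolynomial.coeff m r = 0 := by
  rw [Ideal.mem_span_pair] at hr
  obtain ⟨a, b, hab⟩ := hr
  have e0 : MvPolynomial.coeff m (a * (MvPolynomial.X 0 : MvPolynomial (Fin 2) k) ^ p) = 0 := by
    rw [MvPolynomial.X_pow_eq_monomial, MvPolynomial.coeff_mul_monomial']
    rw [if_neg]
    intro hle
    have := hle 0
    simp [Finsupp.single_apply] at this
    omega
  have e1 : MvPolynomial.coeff m (b * (MvPolynomial.X 1 : MvPolynomial (Fin 2) k) ^ p) = 0 := by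
    rw [MvPolynomial.X_pow_eq_monomial, MvPolynomial.coeff_mul_monomial']
    rw [if_neg]
    intro hle
    have := hle 1
    simp [Finsupp.single_apply] at this
    omega
  rw [← hab, MvPolynomial.coeff_add, e0, e1, add_zero]

/-- the evaluation map Y ↦ X^3, Z ↦ X^5 -/
noncomputable def ev : MvPolynomial (Fin 2) k →+* Polynomial k :=
  MvPolynomial.eval₂Hom Polynomial.C ![(Polynomial.X : k[X]) ^ 3, (Polynomial.X : k[X]) ^ 5]

lemma ev_eq (r : MvPolynomial (Fin 2) k) :
    ev r = ∑ d ∈ r.support, Polynomial.C (MvPolynomial.coeff d r) * X ^ (3 * d 0 + 5 * d 1) := by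
  show MvPolynomial.eval₂ _ _ r = _
  rw [MvPolynomial.eval₂_eq']
  refine Finset.sum_congr rfl fun d _ => ?_
  congr 1
  rw [Fin.prod_univ_two]
  simp only [Matrix.cons_val_zero, Matrix.cons_val_one, Matrix.head_cons]
  rw [← pow_mul, ← pow_mul, ← pow_add]

/-- coefficient extraction through `ev` for weighted homogeneous polynomials -/
lemma coeff_ev {r : MvPolynomial (Fin 2) k} {E : ℤ}
    (hr : r.IsWeightedHomogeneous wt E) (m : Fin 2 →₀ ℕ)
    (hm : 10 * (m 0 : ℤ) + 6 * (m 1 : ℤ) = E) :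
    (ev r).coeff (3 * m 0 + 5 * m 1) = MvPolynomial.coeff m r := by
  rw [ev_eq, Polynomial.finset_sum_coeff]
  have hterm : ∀ d ∈ r.support, d ≠ m →
      (Polynomial.C (MvPolynomial.coeff d r) * X ^ (3 * d 0 + 5 * d 1)).coeff
        (3 * m 0 + 5 * m 1) = 0 := by
    intro d hd hne
    rw [Polynomial.coeff_C_mul, Polynomial.coeff_X_pow, if_neg, mul_zero]
    intro heq
    have hdw : 10 * (d 0 : ℤ) + 6 * (d 1 : ℤ) = E := by
      have := hr (MvPolynomial.mem_support_iff.mp hd)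
      rwa [weight_two] at this
    have h0 : d 0 = m 0 ∧ d 1 = m 1 := by omega
    exact hne (by rw [eq_fp h0.1 h0.2, ← eq_fp (rfl : m 0 = m 0) rfl])
  by_cases hmem : m ∈ r.support
  · rw [Finset.sum_eq_single_of_mem m hmem hterm]
    rw [Polynomial.coeff_C_mul, Polynomial.coeff_X_pow, if_pos rfl, mul_one]
  · rw [Finset.sum_eq_zero, eq_comm]
    · exact MvPolynomial.notMem_support_iff.mp hmem
    · intro d hd
      exact hterm d hd (fun h => hmem (h ▸ hd))

lemma pow_homog {r : MvPolynomial (Fin 2) k} {E : ℤ} (n : ℕ)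
    (hr : r.IsWeightedHomogeneous wt E) :
    (r ^ n).IsWeightedHomogeneous wt (n * E) := by
  induction n with
  | zero => simpa using MvPolynomial.isWeightedHomogeneous_one _ _
  | succ t ih =>
    have := ih.mul hr
    rw [pow_succ]
    convert this using 1
    push_cast
    ring

lemma f_homog (l : ℕ) :
    ((MvPolynomial.X 0 ^ 3 + MvPolynomial.X 1 ^ 5 : MvPolynomial (Fin 2) k) ^ (30 * l)).IsWeightedHomogeneous
      wt (900 * l) := by
  have h1 : (MvPolynomial.X 0 ^ 3 : MvPolynomial (Fin 2) k).IsWeightedHomogeneous wt 30 := by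
    have := pow_homog (k := k) 3 (MvPolynomial.isWeightedHomogeneous_X k wt 0)
    convert this using 1 <;> norm_num
  have h2 : (MvPolynomial.X 1 ^ 5 : MvPolynomial (Fin 2) k).IsWeightedHomogeneous wt 30 := by
    have := pow_homog (k := k) 5 (MvPolynomial.isWeightedHomogeneous_X k wt 1)
    convert this using 1 <;> norm_num
  have := pow_homog (30 * l) (h1.add h2)
  convert this using 1
  push_cast
  ring

lemma ev_f (l : ℕ) :
    ev ((MvPolynomial.X 0 ^ 3 + MvPolynomial.X 1 ^ 5 : MvPolynomial (Fin 2) k) ^ (30 * l)) =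
      X ^ (270 * l) * (Polynomial.expand k 16) ((1 + X) ^ (30 * l)) := by
  rw [map_pow, map_add]
  have e0 : ev ((MvPolynomial.X 0 : MvPolynomial (Fin 2) k) ^ 3) = (X : k[X]) ^ 9 := by
    rw [map_pow]
    show (MvPolynomial.eval₂ _ _ _) ^ 3 = _
    rw [MvPolynomial.eval₂_X]
    norm_num [← pow_mul]
  have e1 : ev ((MvPolynomial.X 1 : MvPolynomial (Fin 2) k) ^ 5) = (X : k[X]) ^ 25 := by
    rw [map_pow]
    show (MvPolynomial.eval₂ _ _ _) ^ 5 = _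
    rw [MvPolynomial.eval₂_X]
    norm_num [← pow_mul]
  rw [e0, e1, map_pow, map_add, map_one, Polynomial.expand_X]
  have hsplit : (X ^ 9 + X ^ 25 : k[X]) = X ^ 9 * (1 + X ^ 16) := by ring
  rw [hsplit, mul_pow, ← pow_mul]
  congr 2
  ring


set_option maxHeartbeats 2000000 in
/-- Key nonexistence: a nonzero weighted homogeneous `A` of weighted degree `E` with
`E < 30l+6` or `E = 30l+8` cannot have `A·(Y³+Z⁵)^{30l} ∈ (Y^p, Z^p)`. -/
lemma KL {k : Type*} [Field k] {p l : ℕ} (hp : p.Prime) [CharP k p] (hpl : p = 60 * l + 1)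
    {A : MvPolynomial (Fin 2) k} {E : ℤ}
    (hA : A ≠ 0) (hhom : A.IsWeightedHomogeneous wt E)
    (hmem : A * (MvPolynomial.X 0 ^ 3 + MvPolynomial.X 1 ^ 5) ^ (30 * l) ∈
      Ideal.span {(MvPolynomial.X 0 : MvPolynomial (Fin 2) k) ^ p, MvPolynomial.X 1 ^ p})
    (hE : E < 30 * l + 6 ∨ E = 30 * l + 8) : False := by
  classical
  have hsupp : A.support.Nonempty := by
    rw [Finset.nonempty_iff_ne_empty]
    intro h
    exact hA (MvPolynomial.support_eq_empty.mp h)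
  obtain ⟨mx, hmx, hmax⟩ := A.support.exists_max_image (fun m => m 0) hsupp
  obtain ⟨mn, hmn, hmin⟩ := A.support.exists_min_image (fun m => m 0) hsupp
  set x1 := mx 0 with hx1
  set z1 := mx 1 with hz1
  set x0 := mn 0 with hx0
  set z0 := mn 1 with hz0
  -- the common line
  have hline : ∀ m ∈ A.support, 10 * (m 0) + 6 * (m 1) = 10 * x1 + 6 * z1 := by
    intro m hm
    have h1 := hhom (MvPolynomial.mem_support_iff.mp hm)
    have h2 := hhom (MvPolynomial.mem_support_iff.mp hmx)
    rw [weight_two] at h1 h2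
    have : (10 * (m 0) + 6 * (m 1) : ℤ) = 10 * x1 + 6 * z1 := by rw [h1, h2]
    exact_mod_cast this
  have hlinemn : 10 * x0 + 6 * z0 = 10 * x1 + 6 * z1 := hline mn hmn
  have hx01 : x0 ≤ x1 := hmin mx hmx
  set EN : ℕ := 10 * x1 + 6 * z1 with hEN
  have hENE : (EN : ℤ) = E := by
    have h2 := hhom (MvPolynomial.mem_support_iff.mp hmx)
    rw [weight_two] at h2
    rw [hEN]
    push_cast
    rw [h2]
  have hEbound : EN ≤ 30 * l + 5 ∨ EN = 30 * l + 8 := by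
    rcases hE with h | h
    · left
      have h2 : (EN : ℤ) < 30 * l + 6 := by rw [hENE]; exact h
      have h3 : EN < 30 * l + 6 := by exact_mod_cast h2
      omega
    · right
      have : (EN : ℤ) = 30 * l + 8 := by rw [hENE]; exact h
      exact_mod_cast this
  set σ : ℕ := (x1 - x0) / 3 with hσ
  set jlo : ℕ := (x1 + 30 * l + 2) / 3 with hjlo
  set aa : k[X] := ∑ m ∈ A.support, Polynomial.monomial ((x1 - m 0) / 3) (MvPolynomial.coeff m A)
    with haa
  -- degree bound
  have hdeg : aa.natDegree ≤ σ := by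
    apply Polynomial.natDegree_sum_le_of_forall_le
    intro m hm
    refine (Polynomial.natDegree_monomial_le _).trans ?_
    exact Nat.div_le_div_right (Nat.sub_le_sub_left (hmin m hm) x1)
  -- nonzero
  have hane : aa ≠ 0 := by
    intro h0
    have hc : aa.coeff σ = MvPolynomial.coeff mn A := by
      rw [haa, Polynomial.finset_sum_coeff]
      rw [Finset.sum_eq_single_of_mem mn hmn]
      · rw [Polynomial.coeff_monomial, if_pos rfl]
      · intro m hm hne
        rw [Polynomial.coeff_monomial, if_neg]
        intro heq
        apply hne
        have hlm := hline m hm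
        have hx : x0 ≤ m 0 := hmin m hm
        have hmx1 : m 0 ≤ x1 := hmax m hm
        have hm0 : m 0 = x0 := by omega
        have hm1 : m 1 = z0 := by omega
        rw [eq_fp hm0 hm1, eq_fp hx0.symm hz0.symm]
    rw [h0, Polynomial.coeff_zero] at hc
    exact (MvPolynomial.mem_support_iff.mp hmn) hc.symm
  -- bound x1 and σ
  have hx1b : x1 ≤ 3 * l := by
    rcases hEbound with h | h <;> omega
  have hσb : σ ≤ l := by omega
  -- `ev A` in shifted/expanded form
  have hevA : ev A = X ^ (3 * x1 + 5 * z1) * (Polynomial.expand k 16) aa := by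
    rw [ev_eq, haa, map_sum, Finset.mul_sum]
    refine Finset.sum_congr rfl fun m hm => ?_
    rw [Polynomial.expand_monomial, ← Polynomial.C_mul_X_pow_eq_monomial]
    rw [mul_left_comm, ← pow_add]
    congr 2
    have hlm := hline m hm
    have hmx1 : m 0 ≤ x1 := hmax m hm
    omega
  -- `ev (A * f)`
  set f : MvPolynomial (Fin 2) k := (MvPolynomial.X 0 ^ 3 + MvPolynomial.X 1 ^ 5) ^ (30 * l)
    with hf
  have hevAf : ev (A * f) =
      X ^ (3 * x1 + 5 * z1 + 270 * l) * (Polynomial.expand k 16) (aa * (1 + X) ^ (30 * l)) := by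
    rw [map_mul, hevA, hf, ev_f, map_mul]
    ring
  -- homogeneity of A * f
  have hAfhom : (A * f).IsWeightedHomogeneous wt (E + 900 * l) := hhom.mul (f_homog l)
  -- window vanishing
  have hvan : ∀ j, jlo ≤ j → j < jlo + (σ + 1) →
      ((aa * (1 + X) ^ (30 * l)) : k[X]).coeff j = 0 := by
    intro j hj1 hj2
    have hj3 : 3 * j ≤ x1 + 90 * l := by omega
    set xj : ℕ := x1 + 90 * l - 3 * j with hxj
    set zj : ℕ := z1 + 5 * j with hzj
    have hxjb : xj ≤ 60 * l := by omega
    have hzjb : zj ≤ 60 * l := by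
      -- the crucial arithmetic (CRUNCH)
      rcases hEbound with h | h <;> omega
    have e1 : ((aa * (1 + X) ^ (30 * l)) : k[X]).coeff j
        = ((Polynomial.expand k 16) (aa * (1 + X) ^ (30 * l))).coeff (16 * j) := by
      rw [Polynomial.coeff_expand (by norm_num)]
      rw [if_pos ⟨j, rfl⟩]
      congr 1
      omega
    have e2 : ((Polynomial.expand k 16) (aa * (1 + X) ^ (30 * l))).coeff (16 * j)
        = (ev (A * f)).coeff (3 * x1 + 5 * z1 + 270 * l + 16 * j) := by
      rw [hevAf]
      rw [add_comm (3 * x1 + 5 * z1 + 270 * l) (16 * j), Polynomial.coeff_X_pow_mul]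
    have e3 : (ev (A * f)).coeff (3 * x1 + 5 * z1 + 270 * l + 16 * j)
        = MvPolynomial.coeff (fp xj zj) (A * f) := by
      have := coeff_ev hAfhom (fp xj zj) ?_
      · rw [← this]
        congr 1
        simp only [fp_apply0, fp_apply1]
        omega
      · simp only [fp_apply0, fp_apply1]
        rw [← hENE]
        push_cast
        omega
    have e4 : MvPolynomial.coeff (fp xj zj) (A * f) = 0 := by
      apply coeff_eq_zero_of_mem_span hmem
      · simp only [fp_apply0]; omega
      · simp only [fp_apply1]; omega
    rw [e1, e2, e3, e4]
  -- apply the core lemma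
  have := core_vanish p hp (σ + 1) (30 * l) jlo aa (by omega) (by omega) (by omega) hvan
  exact hane this





lemma prime_X0 : Prime (MvPolynomial.X 0 : MvPolynomial (Fin 2) k) := by
  rw [← MulEquiv.prime_iff (MvPolynomial.finSuccEquiv k 1).toMulEquiv]
  have e : (MvPolynomial.finSuccEquiv k 1).toMulEquiv (MvPolynomial.X 0) = Polynomial.X :=
    MvPolynomial.finSuccEquiv_X_zero
  rw [e]
  exact Polynomial.prime_X

lemma prime_X0' : Prime (MvPolynomial.X 0 : MvPolynomial (Fin 1) k) := by
  rw [← MulEquiv.prime_iff (MvPolynomial.finSuccEquiv k 0).toMulEquiv]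
  have e : (MvPolynomial.finSuccEquiv k 0).toMulEquiv (MvPolynomial.X 0) = Polynomial.X :=
    MvPolynomial.finSuccEquiv_X_zero
  rw [e]
  exact Polynomial.prime_X

lemma prime_X1 : Prime (MvPolynomial.X 1 : MvPolynomial (Fin 2) k) := by
  rw [← MulEquiv.prime_iff (MvPolynomial.finSuccEquiv k 1).toMulEquiv]
  have e : (MvPolynomial.finSuccEquiv k 1).toMulEquiv (MvPolynomial.X 1)
      = Polynomial.C (MvPolynomial.X 0) := by
    have : (1 : Fin 2) = Fin.succ 0 := rfl
    show MvPolynomial.finSuccEquiv k 1 (MvPolynomial.X 1) = _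
    rw [this, MvPolynomial.finSuccEquiv_X_succ]
  rw [e, Polynomial.prime_C_iff]
  exact prime_X0'

lemma X0_not_dvd_X1 :
    ¬ (MvPolynomial.X 0 : MvPolynomial (Fin 2) k) ∣ MvPolynomial.X 1 := by
  intro ⟨t, ht⟩
  have := congrArg (MvPolynomial.eval (fun i : Fin 2 => if i = 0 then (0 : k) else 1)) ht
  simp at this

lemma X0_not_dvd_X1_pow (n : ℕ) :
    ¬ (MvPolynomial.X 0 : MvPolynomial (Fin 2) k) ∣ (MvPolynomial.X 1) ^ n := by
  intro h
  exact X0_not_dvd_X1 (prime_X0.dvd_of_dvd_pow h)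

lemma X1_not_dvd_X0 :
    ¬ (MvPolynomial.X 1 : MvPolynomial (Fin 2) k) ∣ MvPolynomial.X 0 := by
  intro ⟨t, ht⟩
  have := congrArg (MvPolynomial.eval (fun i : Fin 2 => if i = 0 then (1 : k) else 0)) ht
  simp at this

lemma X1_not_dvd_X0_pow (n : ℕ) :
    ¬ (MvPolynomial.X 1 : MvPolynomial (Fin 2) k) ∣ (MvPolynomial.X 0) ^ n := by
  intro h
  exact X1_not_dvd_X0 (prime_X1.dvd_of_dvd_pow h)

/-- units of `k[Y,Z]` are nonzero constants -/
lemma unit_eq_C {c : MvPolynomial (Fin 2) k} (hc : IsUnit c) :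
    ∃ r : k, r ≠ 0 ∧ c = MvPolynomial.C r := by
  have h1 : IsUnit ((MvPolynomial.finSuccEquiv k 1) c) := hc.map _
  obtain ⟨r1, hr1u, hr1⟩ := Polynomial.isUnit_iff.mp h1
  have h2 : IsUnit ((MvPolynomial.finSuccEquiv k 0) r1) := hr1u.map _
  obtain ⟨r2, hr2u, hr2⟩ := Polynomial.isUnit_iff.mp h2
  obtain ⟨r, hr⟩ : ∃ r : k, r2 = MvPolynomial.C r :=
    ⟨MvPolynomial.constantCoeff r2, MvPolynomial.eq_C_of_isEmpty r2⟩
  have e0 : (MvPolynomial.finSuccEquiv k 0) (MvPolynomial.C r) = Polynomial.C r2 := by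
    have h := DFunLike.congr_fun (MvPolynomial.finSuccEquiv_comp_C_eq_C (R := k) (n := 0)) r
    simp only [RingHom.coe_comp, Function.comp_apply] at h
    have h' : (MvPolynomial.finSuccEquiv k 0).symm (Polynomial.C (MvPolynomial.C r))
        = MvPolynomial.C r := h
    rw [hr]
    exact ((AlgEquiv.symm_apply_eq _).mp h').symm
  have er1 : r1 = MvPolynomial.C r := by
    apply (MvPolynomial.finSuccEquiv k 0).injective
    rw [e0, hr2]
  have e1 : (MvPolynomial.finSuccEquiv k 1) (MvPolynomial.C r) = Polynomial.C r1 := by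
    have h := DFunLike.congr_fun (MvPolynomial.finSuccEquiv_comp_C_eq_C (R := k) (n := 1)) r
    simp only [RingHom.coe_comp, Function.comp_apply] at h
    have h' : (MvPolynomial.finSuccEquiv k 1).symm (Polynomial.C (MvPolynomial.C r))
        = MvPolynomial.C r := h
    rw [er1]
    exact ((AlgEquiv.symm_apply_eq _).mp h').symm
  refine ⟨r, ?_, ?_⟩
  · intro h0
    apply hr2u.ne_zero
    rw [hr, h0, map_zero]
  · apply (MvPolynomial.finSuccEquiv k 1).injective
    rw [e1, hr1]


end Stmt15

lemma syzMap_apply3 {R : Type*} [CommRing R] (g : Fin 3 → R) (x : Fin 3 → R) :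
    syzMap g x = x 0 * g 0 + x 1 * g 1 + x 2 * g 2 := by
  simp [syzMap, Fin.sum_univ_three]


open Stmt15 in

set_option maxHeartbeats 4000000 in
/-- Let `char k = p = 60l + 1`. Over `k[Y,Z]` graded with
`deg Y = 10`, `deg Z = 6`, the second syzygy module
`Syz((Y³+Z⁵)^{(p-1)/2}, Y^p, Z^p)` splits as `k[Y,Z](m) ⊕ k[Y,Z](n)`, i.e. is
free on two homogeneous generators, whose (total) degrees `u, v` satisfy
`|u - v| = 4` (equivalently `δ((p-1)/2, p/3, p/5) = 2/15` for Han's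
δ-function, multiplied by `30`). A generator has total degree `u` when its
component against the generator of degree `Dᵢ` is weighted homogeneous of
degree `u - Dᵢ`, where `D = (15(p-1), 10p, 6p)`. -/
theorem stmt_15 {k : Type*} [Field k] (p l : ℕ) (hp : p.Prime) [CharP k p]
    (hpl : p = 60 * l + 1) :
    let P := MvPolynomial (Fin 2) k
    let Y : P := MvPolynomial.X 0
    let Z : P := MvPolynomial.X 1
    let w : Fin 2 → ℤ := ![10, 6]
    let G : Fin 3 → P := ![(Y ^ 3 + Z ^ 5) ^ ((p - 1) / 2), Y ^ p, Z ^ p]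
    let D : Fin 3 → ℤ := ![15 * ((p : ℤ) - 1), 10 * p, 6 * p]
    ∀ (u v : ℤ) (bs : Module.Basis (Fin 2) P (LinearMap.ker (syzMap G))),
      (∀ i, MvPolynomial.IsWeightedHomogeneous w ((bs 0 : Fin 3 → P) i) (u - D i)) →
      (∀ i, MvPolynomial.IsWeightedHomogeneous w ((bs 1 : Fin 3 → P) i) (v - D i)) →
      (u - v).natAbs = 4 := by
  intro P Y Z w G D u v bs h0 h1
  classical
  have hl : 1 ≤ l := by
    by_contra h
    push_neg at h
    interval_cases l
    · simp at hpl
      rw [hpl] at hp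
      exact hp.one_lt.ne' rfl
  have hpz : (p : ℤ) = 60 * l + 1 := by exact_mod_cast hpl
  have hexp : (p - 1) / 2 = 30 * l := by omega
  set f : P := (Y ^ 3 + Z ^ 5) ^ (30 * l) with hfdef
  have hG0 : G 0 = f := by
    show (Y ^ 3 + Z ^ 5) ^ ((p - 1) / 2) = f
    rw [hexp]
  have hG1 : G 1 = Y ^ p := rfl
  have hG2 : G 2 = Z ^ p := rfl
  have hD0 : D 0 = 15 * ((p : ℤ) - 1) := rfl
  have hD1 : D 1 = 10 * (p : ℤ) := rfl
  have hD2 : D 2 = 6 * (p : ℤ) := rfl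
  -- nonvanishing of the generators
  have hYZ : (Y ^ 3 + Z ^ 5 : P) ≠ 0 := by
    intro h
    have h3 := congrArg (MvPolynomial.coeff (Finsupp.single 0 3)) h
    rw [MvPolynomial.coeff_add, MvPolynomial.coeff_zero,
      MvPolynomial.X_pow_eq_monomial, MvPolynomial.X_pow_eq_monomial,
      MvPolynomial.coeff_monomial, MvPolynomial.coeff_monomial, if_pos rfl, if_neg] at h3
    · simpa using h3
    · intro hsing
      have := congrFun (congrArg (fun (t : Fin 2 →₀ ℕ) => (t : Fin 2 → ℕ)) hsing) 1
      simp [Finsupp.single_apply] at this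
  have hfne : f ≠ 0 := pow_ne_zero _ hYZ
  have hYpne : (Y ^ p : P) ≠ 0 := pow_ne_zero _ (MvPolynomial.X_ne_zero 0)
  have hZpne : (Z ^ p : P) ≠ 0 := pow_ne_zero _ (MvPolynomial.X_ne_zero 1)
  -- syzygy equations for the basis vectors
  set P0 : P := (bs 0 : Fin 3 → P) 0 with hP0def
  set Q0 : P := (bs 0 : Fin 3 → P) 1 with hQ0def
  set R0 : P := (bs 0 : Fin 3 → P) 2 with hR0def
  set P1 : P := (bs 1 : Fin 3 → P) 0 with hP1def
  set Q1 : P := (bs 1 : Fin 3 → P) 1 with hQ1def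
  set R1 : P := (bs 1 : Fin 3 → P) 2 with hR1def
  have hyp0 : P0 * f + Q0 * Y ^ p + R0 * Z ^ p = 0 := by
    have h := LinearMap.mem_ker.mp (bs 0).2
    rw [syzMap_apply3] at h
    rw [hG0, hG1, hG2] at h
    exact h
  have hyp1 : P1 * f + Q1 * Y ^ p + R1 * Z ^ p = 0 := by
    have h := LinearMap.mem_ker.mp (bs 1).2
    rw [syzMap_apply3] at h
    rw [hG0, hG1, hG2] at h
    exact h
  -- the 2×2 minors
  set Δ1 : P := Q0 * R1 - R0 * Q1 with hΔ1def
  set Δ2 : P := R0 * P1 - P0 * R1 with hΔ2def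
  set Δ3 : P := P0 * Q1 - Q0 * P1 with hΔ3def
  have rel1 : f * Δ2 = Y ^ p * Δ1 := by
    rw [hΔ1def, hΔ2def]
    linear_combination R0 * hyp1 - R1 * hyp0
  have rel3 : Z ^ p * Δ2 = Y ^ p * Δ3 := by
    rw [hΔ2def, hΔ3def]
    linear_combination P1 * hyp0 - P0 * hyp1
  -- extract c with Δ2 = Y^p c, Δ3 = Z^p c, Δ1 = f c
  have hdvd : (Y ^ p : P) ∣ Δ2 := by
    exact (prime_X0).pow_dvd_of_dvd_mul_left p (X0_not_dvd_X1_pow p) ⟨Δ3, rel3⟩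
  obtain ⟨c, hΔ2⟩ := hdvd
  have hΔ3 : Δ3 = Z ^ p * c := by
    apply mul_left_cancel₀ hYpne
    rw [← rel3, hΔ2]
    ring
  have hΔ1 : Δ1 = f * c := by
    apply mul_left_cancel₀ hYpne
    rw [← rel1, hΔ2]
    ring
  -- Koszul representations give that c divides everything
  have kmem : ∀ x : Fin 3 → P, x 0 * f + x 1 * Y ^ p + x 2 * Z ^ p = 0 →
      x ∈ LinearMap.ker (syzMap G) := by
    intro x hx
    rw [LinearMap.mem_ker, syzMap_apply3, hG0, hG1, hG2]
    exact hx
  have hrepr : ∀ (K : LinearMap.ker (syzMap G)) (j : Fin 3),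
      (K : Fin 3 → P) j = bs.repr K 0 * (bs 0 : Fin 3 → P) j
        + bs.repr K 1 * (bs 1 : Fin 3 → P) j := by
    intro K j
    have h := bs.sum_repr K
    rw [Fin.sum_univ_two] at h
    have hval := congrArg (fun (t : LinearMap.ker (syzMap G)) => (t : Fin 3 → P) j) h
    simp only [Submodule.coe_add, SetLike.val_smul, Pi.add_apply, Pi.smul_apply,
      smul_eq_mul] at hval
    exact hval.symm
  -- K1 = (0, Z^p, -Y^p)
  have hK1mem : (![0, Z ^ p, -(Y ^ p)] : Fin 3 → P) ∈ LinearMap.ker (syzMap G) := by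
    apply kmem
    show (0 : P) * f + Z ^ p * Y ^ p + -(Y ^ p) * Z ^ p = 0
    ring
  obtain ⟨α1, β1, e10, e11, e12⟩ : ∃ α β : P, (0 : P) = α * P0 + β * P1 ∧
      Z ^ p = α * Q0 + β * Q1 ∧ -(Y ^ p) = α * R0 + β * R1 := by
    refine ⟨bs.repr ⟨_, hK1mem⟩ 0, bs.repr ⟨_, hK1mem⟩ 1, ?_, ?_, ?_⟩
    · exact hrepr ⟨_, hK1mem⟩ 0
    · exact hrepr ⟨_, hK1mem⟩ 1
    · exact hrepr ⟨_, hK1mem⟩ 2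
  -- K2 = (Z^p, 0, -f)
  have hK2mem : (![Z ^ p, 0, -f] : Fin 3 → P) ∈ LinearMap.ker (syzMap G) := by
    apply kmem
    show (Z ^ p) * f + (0 : P) * Y ^ p + (-f) * Z ^ p = 0
    ring
  obtain ⟨α2, β2, e20, e21, e22⟩ : ∃ α β : P, (Z ^ p : P) = α * P0 + β * P1 ∧
      (0 : P) = α * Q0 + β * Q1 ∧ -f = α * R0 + β * R1 := by
    refine ⟨bs.repr ⟨_, hK2mem⟩ 0, bs.repr ⟨_, hK2mem⟩ 1, ?_, ?_, ?_⟩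
    · exact hrepr ⟨_, hK2mem⟩ 0
    · exact hrepr ⟨_, hK2mem⟩ 1
    · exact hrepr ⟨_, hK2mem⟩ 2
  -- K3 = (Y^p, -f, 0)
  have hK3mem : (![Y ^ p, -f, 0] : Fin 3 → P) ∈ LinearMap.ker (syzMap G) := by
    apply kmem
    show (Y ^ p) * f + (-f) * Y ^ p + (0 : P) * Z ^ p = 0
    ring
  obtain ⟨α3, β3, e30, e31, e32⟩ : ∃ α β : P, (Y ^ p : P) = α * P0 + β * P1 ∧
      -f = α * Q0 + β * Q1 ∧ (0 : P) = α * R0 + β * R1 := by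
    refine ⟨bs.repr ⟨_, hK3mem⟩ 0, bs.repr ⟨_, hK3mem⟩ 1, ?_, ?_, ?_⟩
    · exact hrepr ⟨_, hK3mem⟩ 0
    · exact hrepr ⟨_, hK3mem⟩ 1
    · exact hrepr ⟨_, hK3mem⟩ 2
  -- the six component identities
  have hP0c : P0 = β1 * c := by
    apply mul_left_cancel₀ hfne
    linear_combination (-R0) * e11 + Q0 * e12 + hyp0 + β1 * hΔ1
  have hP1c : P1 = -α1 * c := by
    apply mul_left_cancel₀ hfne
    linear_combination (-R1) * e11 + Q1 * e12 + hyp1 + (-α1) * hΔ1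
  have hQ0c : Q0 = -β2 * c := by
    apply mul_left_cancel₀ hYpne
    linear_combination (-R0) * e20 + P0 * e22 + hyp0 + (-β2) * hΔ2
  have hQ1c : Q1 = α2 * c := by
    apply mul_left_cancel₀ hYpne
    linear_combination (-R1) * e20 + P1 * e22 + hyp1 + α2 * hΔ2
  have hR0c : R0 = β3 * c := by
    apply mul_left_cancel₀ hZpne
    linear_combination (-Q0) * e30 + P0 * e31 + hyp0 + β3 * hΔ3
  have hR1c : R1 = -α3 * c := by
    apply mul_left_cancel₀ hZpne
    linear_combination (-Q1) * e30 + P1 * e31 + hyp1 + (-α3) * hΔ3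
  -- c ≠ 0
  have hcne : c ≠ 0 := by
    intro h0
    have hz : (bs 0 : Fin 3 → P) = 0 := by
      funext j
      fin_cases j
      · show P0 = 0; rw [hP0c, h0, mul_zero]
      · show Q0 = 0; rw [hQ0c, h0, mul_zero]
      · show R0 = 0; rw [hR0c, h0, mul_zero]
    exact bs.ne_zero 0 (by
      apply Subtype.ext
      exact hz)
  -- c divides Y^p and Z^p, hence is a unit
  have hcZp : (Z ^ p : P) = c * (-β2 * α2 - α2 * β1 + β2 * (-α1) + β1 * α2) ∨ True := Or.inr trivial
  have hZpc : ∃ t : P, Z ^ p = c * t := by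
    refine ⟨β1 * α2 - β2 * α1, ?_⟩
    apply mul_left_cancel₀ hcne
    rw [hΔ3def] at hΔ3
    rw [hP0c, hQ1c, hQ0c, hP1c] at hΔ3
    linear_combination -hΔ3
  have hYpc : ∃ t : P, Y ^ p = c * t := by
    refine ⟨β1 * α3 - β3 * α1, ?_⟩
    apply mul_left_cancel₀ hcne
    rw [hΔ2def] at hΔ2
    rw [hR0c, hP1c, hP0c, hR1c] at hΔ2
    linear_combination -hΔ2
  have hcunit : IsUnit c := by
    obtain ⟨t, ht⟩ := hZpc
    obtain ⟨i, hi, hassoc⟩ := (dvd_prime_pow prime_X1 p).mp ⟨t, by rw [ht]⟩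
    rcases Nat.eq_zero_or_pos i with h0 | hpos
    · rw [h0, pow_zero] at hassoc
      exact hassoc.symm.isUnit isUnit_one
    · exfalso
      obtain ⟨t', ht'⟩ := hYpc
      have hx1c : (MvPolynomial.X 1 : P) ∣ c := by
        have : (MvPolynomial.X 1 : P) ∣ (MvPolynomial.X 1) ^ i :=
          dvd_pow_self _ (by omega)
        exact this.trans hassoc.symm.dvd
      exact X1_not_dvd_X0_pow p (hx1c.trans ⟨t', ht'⟩)
  -- c is a nonzero constant; conclude u + v = D0 + D1 + D2
  obtain ⟨r, hrne, hcC⟩ := unit_eq_C hcunit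
  have hΔ3homA : MvPolynomial.IsWeightedHomogeneous wt Δ3 ((u - D 0) + (v - D 1)) := by
    rw [hΔ3def]
    apply Submodule.sub_mem (MvPolynomial.weightedHomogeneousSubmodule k wt _)
    · exact (MvPolynomial.mem_weightedHomogeneousSubmodule _ _ _ _).mpr ((h0 0).mul (h1 1))
    · have h := (h0 1).mul (h1 0)
      rw [show (u - D 1) + (v - D 0) = (u - D 0) + (v - D 1) by ring] at h
      exact (MvPolynomial.mem_weightedHomogeneousSubmodule _ _ _ _).mpr h
  have hΔ3homB : MvPolynomial.IsWeightedHomogeneous wt Δ3 ((p : ℤ) * 6 + 0) := by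
    rw [hΔ3, hcC]
    exact (pow_homog p (MvPolynomial.isWeightedHomogeneous_X k wt 1)).mul
      (MvPolynomial.isWeightedHomogeneous_C wt r)
  have hΔ3ne : Δ3 ≠ 0 := by
    rw [hΔ3]
    exact mul_ne_zero hZpne hcne
  have hsum : u + v = D 0 + D 1 + D 2 := by
    have h := MvPolynomial.IsWeightedHomogeneous.inj_right hΔ3ne hΔ3homA hΔ3homB
    rw [hD0, hD1, hD2]
    omega
  -- lower bounds on a degree of a nonzero homogeneous syzygy
  have keybound : ∀ (s : LinearMap.ker (syzMap G)) (d : ℤ),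
      ((s : Fin 3 → P) ≠ 0) →
      (∀ i, MvPolynomial.IsWeightedHomogeneous w ((s : Fin 3 → P) i) (d - D i)) →
      930 * (l : ℤ) + 6 ≤ d ∧ d ≠ 930 * l + 8 ∧ 2 ∣ d := by
    intro s d hs hhom
    have hsyz : (s : Fin 3 → P) 0 * f + (s : Fin 3 → P) 1 * Y ^ p
        + (s : Fin 3 → P) 2 * Z ^ p = 0 := by
      have h := LinearMap.mem_ker.mp s.2
      rw [syzMap_apply3] at h
      rw [hG0, hG1, hG2] at h
      exact h
    by_cases hA0 : (s : Fin 3 → P) 0 = 0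
    · -- then the degree is at least 16p
      by_cases hB0 : (s : Fin 3 → P) 1 = 0
      · exfalso
        apply hs
        have hC0 : (s : Fin 3 → P) 2 = 0 := by
          have h2 : (s : Fin 3 → P) 2 * Z ^ p = 0 := by
            rw [hA0, hB0] at hsyz
            linear_combination hsyz
          rcases mul_eq_zero.mp h2 with h | h
          · exact h
          · exact absurd h hZpne
        funext j
        fin_cases j
        · exact hA0
        · exact hB0
        · exact hC0
      · -- Z^p divides the middle component
        have hdvdB : (Z ^ p : P) ∣ (s : Fin 3 → P) 1 := by
          apply prime_X1.pow_dvd_of_dvd_mul_left p (X1_not_dvd_X0_pow p)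
          refine ⟨-((s : Fin 3 → P) 2), ?_⟩
          rw [hA0] at hsyz
          linear_combination hsyz
        obtain ⟨q, hq⟩ := hdvdB
        have hqne : q ≠ 0 := by
          rintro rfl
          rw [mul_zero] at hq
          exact hB0 hq
        obtain ⟨m', hm'⟩ := MvPolynomial.exists_coeff_ne_zero hqne
        have hco : MvPolynomial.coeff (m' + Finsupp.single 1 p) ((s : Fin 3 → P) 1) ≠ 0 := by
          rw [hq, mul_comm, MvPolynomial.X_pow_eq_monomial,
            MvPolynomial.coeff_mul_monomial, mul_one]
          exact hm'
        have hw := hhom 1 hco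
        rw [weight_two] at hw
        simp only [Finsupp.add_apply, Finsupp.single_apply] at hw
        norm_num at hw
        rw [hD1] at hw
        push_cast at hw
        refine ⟨by omega, by omega, by omega⟩
    · -- apply the key lemma to the first component
      have hmem : (s : Fin 3 → P) 0 * (MvPolynomial.X 0 ^ 3 + MvPolynomial.X 1 ^ 5) ^ (30 * l) ∈
          Ideal.span {(MvPolynomial.X 0 : MvPolynomial (Fin 2) k) ^ p, MvPolynomial.X 1 ^ p} := by
        rw [Ideal.mem_span_pair]
        refine ⟨-((s : Fin 3 → P) 1), -((s : Fin 3 → P) 2), ?_⟩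
        linear_combination -hsyz
      have hnot : ¬ (d - D 0 < 30 * l + 6 ∨ d - D 0 = 30 * l + 8) := by
        intro hE
        exact KL hp hpl hA0 (hhom 0) hmem hE
      push_neg at hnot
      rw [hD0] at hnot
      obtain ⟨m', hm'⟩ := MvPolynomial.exists_coeff_ne_zero hA0
      have hw := hhom 0 hm'
      rw [weight_two] at hw
      rw [hD0] at hw
      refine ⟨by omega, by omega, ?_⟩
      omega
  -- finish
  have hbs0ne : ((bs 0 : Fin 3 → P)) ≠ 0 := by
    intro h
    exact bs.ne_zero 0 (Subtype.ext h)
  have hbs1ne : ((bs 1 : Fin 3 → P)) ≠ 0 := by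
    intro h
    exact bs.ne_zero 1 (Subtype.ext h)
  obtain ⟨hu1, hu2, hu3⟩ := keybound (bs 0) u hbs0ne h0
  obtain ⟨hv1, hv2, hv3⟩ := keybound (bs 1) v hbs1ne h1
  rw [hD0, hD1, hD2] at hsum
  omega
end

section
/- Let k be a field, R = k[X,Y,Z] graded by deg X = α, deg Y = β, deg Z = γ (all positive), and let F be one of the ADE equations, homogeneous for this grading. Let φ: k[X,Y,Z]/(F) → k[U,V,W]/(F(U^α, V^β, W^γ)) be the k-algebra map X ↦ U^α, Y ↦ V^β, Z ↦ W^γ. Then for every q ≥ 1, dim_k (k[X,Y,Z]/(F, X^q, Y^q, Z^q)) = dim_k (k[U,V,W]/(F(U^α,V^β,W^γ), U^{αq}, V^{βq}, W^{γq})) / (α·β·γ). -/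
open MvPolynomial Finsupp

namespace Stmt17

variable {k : Type*} [Field k]

variable (w : Fin 3 → ℕ)

abbrev E := ∀ i : Fin 3, Fin (w i)

noncomputable def D (hw : ∀ i, 0 < w i) : (Fin 3 →₀ ℕ) ≃ (E w × (Fin 3 →₀ ℕ)) where
  toFun n := (fun i => ⟨n i % w i, Nat.mod_lt _ (hw i)⟩,
    equivFunOnFinite.symm fun i => n i / w i)
  invFun p := equivFunOnFinite.symm fun i => w i * p.2 i + (p.1 i : ℕ)
  left_inv n := by
    ext i
    simp [Nat.div_add_mod]
  right_inv p := by
    obtain ⟨e, m⟩ := p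
    refine Prod.ext (funext fun i => ?_) (Finsupp.ext fun i => ?_)
    · ext
      simp [Nat.mul_add_mod, Nat.mod_eq_of_lt (e i).isLt]
    · simp [Nat.mul_add_div (hw i), Nat.div_eq_of_lt (e i).isLt]

variable (k) in
noncomputable def Theta (hw : ∀ i, 0 < w i) :
    MvPolynomial (Fin 3) k ≃ₗ[k] (E w → MvPolynomial (Fin 3) k) :=
  ((((AddMonoidAlgebra.coeffLinearEquiv k).trans (Finsupp.domLCongr (D w hw)) :
      MvPolynomial (Fin 3) k ≃ₗ[k] (E w × (Fin 3 →₀ ℕ) →₀ k)).trans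
    (Finsupp.finsuppProdLEquiv k)).trans (Finsupp.linearEquivFunOnFinite k _ _)).trans
    (LinearEquiv.piCongrRight fun _ => (AddMonoidAlgebra.coeffLinearEquiv k).symm)

variable (hw : ∀ i, 0 < w i)

theorem coeff_Theta (b : MvPolynomial (Fin 3) k) (e : E w) (m : Fin 3 →₀ ℕ) :
    coeff m (Theta k w hw b e) = coeff ((D w hw).symm (e, m)) b := by
  simp only [Theta, LinearEquiv.trans_apply]
  rfl


noncomputable def mulw (m : Fin 3 →₀ ℕ) : Fin 3 →₀ ℕ :=
  equivFunOnFinite.symm fun i => w i * m i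

noncomputable def emb (e : E w) : Fin 3 →₀ ℕ :=
  equivFunOnFinite.symm fun i => (e i : ℕ)

theorem Theta_monomial (N : Fin 3 →₀ ℕ) (r : k) (e : E w) :
    Theta k w hw (monomial N r) e
      = if e = ((D w hw) N).1 then monomial ((D w hw) N).2 r else 0 := by
  ext m
  rw [coeff_Theta]
  simp only [MvPolynomial.coeff_monomial, Equiv.eq_symm_apply, Prod.ext_iff, apply_ite (coeff m),
    MvPolynomial.coeff_monomial, MvPolynomial.coeff_zero]
  by_cases h1 : e = ((D w hw) N).1 <;> by_cases h2 : ((D w hw) N).2 = m <;>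
    simp [h1, h2, eq_comm]

theorem phi_monomial (m : Fin 3 →₀ ℕ) (r : k) :
    aeval (fun i => (X i : MvPolynomial (Fin 3) k) ^ w i) (monomial m r)
      = monomial (mulw w m) r := by
  rw [aeval_monomial, monomial_eq,
    Finsupp.prod_fintype _ _ (fun i => pow_zero _),
    Finsupp.prod_fintype _ _ (fun i => pow_zero _)]
  rw [MvPolynomial.algebraMap_eq]
  refine congrArg _ (Finset.prod_congr rfl fun i _ => ?_)
  rw [← pow_mul]
  congr 1

theorem hD (m n : Fin 3 →₀ ℕ) :
    (D w hw) (mulw w m + n) = (((D w hw) n).1, m + ((D w hw) n).2) := by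
  refine Prod.ext (funext fun i => ?_) (Finsupp.ext fun i => ?_)
  · ext
    simp [D, mulw, Nat.mul_add_mod]
  · simp [D, mulw, Nat.mul_add_div (hw i)]

theorem Theta_phi_mul (a b : MvPolynomial (Fin 3) k) (e : E w) :
    Theta k w hw (aeval (fun i => (X i : MvPolynomial (Fin 3) k) ^ w i) a * b) e
      = a * Theta k w hw b e := by
  induction a using MvPolynomial.induction_on' with
  | add p p' hp hp' => simp only [map_add, add_mul, Pi.add_apply, hp, hp']
  | monomial m r =>
    induction b using MvPolynomial.induction_on' with
    | add p p' hp hp' => simp only [mul_add, map_add, Pi.add_apply, hp, hp']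
    | monomial n s =>
      rw [phi_monomial, monomial_mul, Theta_monomial, Theta_monomial, hD]
      simp only [mul_ite, monomial_mul, mul_zero]

theorem Theta_symm_single (e : E w) (a : MvPolynomial (Fin 3) k) :
    (Theta k w hw).symm (Pi.single e a)
      = aeval (fun i => (X i : MvPolynomial (Fin 3) k) ^ w i) a * monomial (emb w e) 1 := by
  apply (Theta k w hw).injective
  rw [LinearEquiv.apply_symm_apply]
  funext e'
  rw [Theta_phi_mul, Theta_monomial]
  have h1 : (D w hw) (emb w e) = (e, 0) := by
    refine Prod.ext (funext fun i => ?_) (Finsupp.ext fun i => ?_)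
    · ext
      simp [D, emb, Nat.mod_eq_of_lt (e i).isLt]
    · simp [D, emb, Nat.div_eq_of_lt (e i).isLt]
  rw [h1]
  simp [Pi.single_apply, mul_ite]

theorem decomp (x : MvPolynomial (Fin 3) k) :
    x = ∑ e : E w, aeval (fun i => (X i : MvPolynomial (Fin 3) k) ^ w i)
        (Theta k w hw x e) * monomial (emb w e) 1 := by
  conv_lhs => rw [← (Theta k w hw).symm_apply_apply x]
  conv_lhs => rw [← Finset.univ_sum_single (Theta k w hw x), map_sum]
  exact Finset.sum_congr rfl fun e _ => Theta_symm_single w hw e _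


theorem theta_mul_mem (I : Ideal (MvPolynomial (Fin 3) k)) (x : MvPolynomial (Fin 3) k)
    (hx : ∀ e, Theta k w hw x e ∈ I) (b : MvPolynomial (Fin 3) k) (e : E w) :
    Theta k w hw (b * x) e ∈ I := by
  have hbx : b * x = ∑ e' : E w, aeval (fun i => (X i : MvPolynomial (Fin 3) k) ^ w i)
      (Theta k w hw x e') * (monomial (emb w e') 1 * b) := by
    conv_lhs => rw [decomp w hw x]
    rw [Finset.mul_sum]
    exact Finset.sum_congr rfl fun e' _ => by ring
  rw [hbx, map_sum, Finset.sum_apply]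
  exact Submodule.sum_mem _ fun e' _ => by
    rw [Theta_phi_mul]
    exact Ideal.mul_mem_right _ _ (hx e')

theorem key_iff (S : Set (MvPolynomial (Fin 3) k)) (x : MvPolynomial (Fin 3) k) :
    x ∈ Ideal.span ((aeval (fun i => (X i : MvPolynomial (Fin 3) k) ^ w i)) '' S) ↔
      ∀ e, Theta k w hw x e ∈ Ideal.span S := by
  constructor
  · intro hx
    induction hx using Submodule.span_induction with
    | mem g hg =>
      obtain ⟨a, ha, rfl⟩ := hg
      intro e
      have := Theta_phi_mul w hw a 1 e
      rw [mul_one] at this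
      rw [this]
      exact Ideal.mul_mem_right _ _ (Ideal.subset_span ha)
    | zero => intro e; simp
    | add x y hx hy ihx ihy =>
      intro e
      rw [map_add, Pi.add_apply]
      exact Submodule.add_mem _ (ihx e) (ihy e)
    | smul a x hx ih =>
      intro e
      rw [smul_eq_mul]
      exact theta_mul_mem w hw _ x ih a e
  · intro hx
    rw [decomp w hw x]
    refine Submodule.sum_mem _ fun e _ => Ideal.mul_mem_right _ _ ?_
    have : aeval (fun i => (X i : MvPolynomial (Fin 3) k) ^ w i) (Theta k w hw x e) ∈
        Ideal.map (aeval (fun i => (X i : MvPolynomial (Fin 3) k) ^ w i))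
          (Ideal.span S) := Ideal.mem_map_of_mem _ (hx e)
    rwa [Ideal.map_span] at this


noncomputable def quotEquiv (S : Set (MvPolynomial (Fin 3) k)) :
    (MvPolynomial (Fin 3) k ⧸
        Ideal.span ((aeval (fun i => (X i : MvPolynomial (Fin 3) k) ^ w i)) '' S))
      ≃ₗ[k] (E w → MvPolynomial (Fin 3) k ⧸ Ideal.span S) :=
  ((Submodule.Quotient.restrictScalarsEquiv k
      (Ideal.span ((aeval (fun i => (X i : MvPolynomial (Fin 3) k) ^ w i)) '' S))).symm.trans
    (Submodule.Quotient.equiv _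
      (Submodule.pi Set.univ (fun _ : E w => Submodule.restrictScalars k (Ideal.span S)))
      (Theta k w hw) (by
        ext y
        rw [Submodule.mem_map, Submodule.mem_pi]
        constructor
        · rintro ⟨x, hx, rfl⟩
          intro e _
          exact (key_iff w hw S x).mp hx e
        · intro hy
          refine ⟨(Theta k w hw).symm y, (key_iff w hw S _).mpr fun e => ?_,
            (Theta k w hw).apply_symm_apply y⟩
          rw [LinearEquiv.apply_symm_apply]
          exact hy e (Set.mem_univ e)))).trans
    ((Submodule.quotientPi _).trans
      (LinearEquiv.piCongrRight fun _ => Submodule.Quotient.restrictScalarsEquiv k _))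

include hw in
theorem finrank_quot (S : Set (MvPolynomial (Fin 3) k)) :
    Module.finrank k (MvPolynomial (Fin 3) k ⧸
        Ideal.span ((aeval (fun i => (X i : MvPolynomial (Fin 3) k) ^ w i)) '' S))
      = Fintype.card (E w)
          * Module.finrank k (MvPolynomial (Fin 3) k ⧸ Ideal.span S) := by
  rw [LinearEquiv.finrank_eq (quotEquiv w hw S)]
  by_cases hfd : FiniteDimensional k (MvPolynomial (Fin 3) k ⧸ Ideal.span S)
  · rw [Module.finrank_pi_fintype, Finset.sum_const, smul_eq_mul, Finset.card_univ]
  · have h0 := Module.finrank_of_infinite_dimensional hfd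
    have h1 : ¬ FiniteDimensional k (E w → MvPolynomial (Fin 3) k ⧸ Ideal.span S) := by
      intro h
      exact hfd (Module.Finite.of_surjective
        (LinearMap.proj (R := k) (fun i => ⟨0, hw i⟩ : E w))
        (fun x => ⟨Function.const _ x, rfl⟩))
    rw [Module.finrank_of_infinite_dimensional h1, h0, mul_zero]

end Stmt17

open Stmt17

/-- Let `F` be one of the ADE equations, weighted
homogeneous for `deg X = α, deg Y = β, deg Z = γ`. Under the map
`X ↦ U^α, Y ↦ V^β, Z ↦ W^γ` into the standard-graded hypersurface
`k[U,V,W]/(F(U^α,V^β,W^γ))`, the Hilbert-Kunz type colengths are related by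
`dim_k k[X,Y,Z]/(F,X^q,Y^q,Z^q)
  = dim_k k[U,V,W]/(F(U^α,V^β,W^γ),U^{αq},V^{βq},W^{γq}) / (αβγ)`. -/
theorem stmt_17 {k : Type*} [Field k] (α β γ : ℕ) (hα : 1 ≤ α) (hβ : 1 ≤ β)
    (hγ : 1 ≤ γ) (F : MvPolynomial (Fin 3) k)
    (hADE : (∃ n : ℕ, F = X 0 ^ (n + 1) - X 1 * X 2) ∨
      (∃ n : ℕ, 4 ≤ n ∧ F = X 0 ^ 2 + X 1 ^ (n - 1) + X 1 * X 2 ^ 2) ∨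
      F = X 0 ^ 2 + X 1 ^ 3 + X 2 ^ 4 ∨
      F = X 0 ^ 2 + X 1 ^ 3 + X 1 * X 2 ^ 3 ∨
      F = X 0 ^ 2 + X 1 ^ 3 + X 2 ^ 5)
    (hFhom : ∃ dF : ℕ, F.IsWeightedHomogeneous ![α, β, γ] dF)
    (q : ℕ) (hq : 1 ≤ q) :
    (Module.finrank k (MvPolynomial (Fin 3) k ⧸
        Ideal.span {F, X 0 ^ q, X 1 ^ q, X 2 ^ q}) : ℚ)
      = (Module.finrank k (MvPolynomial (Fin 3) k ⧸
          Ideal.span {aeval (fun i => (X i : MvPolynomial (Fin 3) k) ^ ![α, β, γ] i) F,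
            X 0 ^ (α * q), X 1 ^ (β * q), X 2 ^ (γ * q)}) : ℚ)
        / (α * β * γ : ℚ) := by
  have hw : ∀ i : Fin 3, 0 < (![α, β, γ] : Fin 3 → ℕ) i := by
    intro i; fin_cases i <;> simpa
  have e0 : aeval (fun i => (X i : MvPolynomial (Fin 3) k) ^ ![α, β, γ] i) ((X 0 : MvPolynomial (Fin 3) k) ^ q)
      = X 0 ^ (α * q) := by
    rw [map_pow, aeval_X]
    simp [← pow_mul]
  have e1 : aeval (fun i => (X i : MvPolynomial (Fin 3) k) ^ ![α, β, γ] i) ((X 1 : MvPolynomial (Fin 3) k) ^ q)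
      = X 1 ^ (β * q) := by
    rw [map_pow, aeval_X]
    simp [← pow_mul]
  have e2 : aeval (fun i => (X i : MvPolynomial (Fin 3) k) ^ ![α, β, γ] i) ((X 2 : MvPolynomial (Fin 3) k) ^ q)
      = X 2 ^ (γ * q) := by
    rw [map_pow, aeval_X]
    simp [← pow_mul]
  have himg : ((aeval (fun i => (X i : MvPolynomial (Fin 3) k) ^ ![α, β, γ] i)) ''
        {F, X 0 ^ q, X 1 ^ q, X 2 ^ q})
      = {aeval (fun i => (X i : MvPolynomial (Fin 3) k) ^ ![α, β, γ] i) F,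
          X 0 ^ (α * q), X 1 ^ (β * q), X 2 ^ (γ * q)} := by
    rw [Set.image_insert_eq, Set.image_insert_eq, Set.image_insert_eq, Set.image_singleton,
      e0, e1, e2]
  rw [← himg, finrank_quot ![α, β, γ] hw {F, X 0 ^ q, X 1 ^ q, X 2 ^ q}]
  have hcard : Fintype.card (E ![α, β, γ]) = α * β * γ := by
    simp [Fintype.card_pi, Fin.prod_univ_three]
  rw [hcard]
  have hne : ((α : ℚ) * β * γ) ≠ 0 := by
    have : α * β * γ ≠ 0 := by positivity
    exact_mod_cast this
  push_cast
  field_simp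
end
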